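/- arXiv:2110.13753 — 2 statements merged into one kernel-verified Lean document; each statement's English description precedes it below -/
import Mathlib

section
/- For every n ≥ 0, the number of octant walks of length n from (0,0) to (0,0) equals T₃(n). Here an octant walk of length n is a function w : {0,…,n−1} → ℤ² such that each w(i) lies in {(1,0),(0,1),(−1,1),(−1,0),(0,−1),(1,−1),(0,0)}, every partial sum p_m = Σ_{i<m} w(i) (0 ≤ m ≤ n) lies in the region {(x,y) ∈ ℤ² : x ≥ y ≥ 0}, and whenever w(i) = (0,0) the point p_i = (x,y) at which the zero step is taken satisfies x > y. -/
open scoped BigOperators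

/-- The Laurent monomial `xᵃyᵇ` in `ℤ[x,x⁻¹,y,y⁻¹]`. -/
noncomputable def mono (a b : ℤ) : AddMonoidAlgebra ℤ (ℤ × ℤ) := AddMonoidAlgebra.single (a, b) 1

/-- `K = 1 + x + y + xy + x⁻¹ + y⁻¹ + x⁻¹y⁻¹`. -/
noncomputable def Kpoly : AddMonoidAlgebra ℤ (ℤ × ℤ) :=
  mono 0 0 + mono 1 0 + mono 0 1 + mono 1 1 + mono (-1) 0 + mono 0 (-1) + mono (-1) (-1)

/-- `Δ = x⁻²y⁻³·(x²y³ − xy³ + x⁻¹y² − x⁻²y + x⁻³y⁻¹ − x⁻³y⁻² + x⁻²y⁻³ − x⁻¹y⁻³ + xy⁻²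
      − x²y⁻¹ + x³y − x³y²)`, expanded. -/
noncomputable def Dpoly : AddMonoidAlgebra ℤ (ℤ × ℤ) :=
  mono 0 0 - mono (-1) 0 + mono (-3) (-1) - mono (-4) (-2) + mono (-5) (-4) - mono (-5) (-5)
  + mono (-4) (-6) - mono (-3) (-6) + mono (-1) (-5) - mono 0 (-4) + mono 1 (-2) - mono 1 (-1)

/-- `T₃(n)` is the constant term (coefficient of `x⁰y⁰`) of `Δ·Kⁿ`. -/
noncomputable def T3 (n : ℕ) : ℤ := (Dpoly * Kpoly ^ n).coeff (0, 0)

instance amaCoeFun : CoeFun (AddMonoidAlgebra ℤ (ℤ × ℤ)) (fun _ => ℤ × ℤ → ℤ) := ⟨fun f => f.coeff⟩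


/-- The `m`-th partial sum `p_m = Σ_{i<m} w(i)` of a walk `w : Fin n → ℤ²`. -/
def partialSum {n : ℕ} (w : Fin n → ℤ × ℤ) (m : ℕ) : ℤ × ℤ :=
  ∑ i ∈ Finset.univ.filter (fun i : Fin n => (i : ℕ) < m), w i

/-- An octant walk of length `n` from `(0,0)` to `(0,0)`: steps in
`{(1,0),(0,1),(−1,1),(−1,0),(0,−1),(1,−1),(0,0)}`, all partial sums in
`{(x,y) : x ≥ y ≥ 0}`, ending at `(0,0)`, and a zero step is only allowed at a
point `(x,y)` with `x > y`. -/
def IsOctantWalk {n : ℕ} (w : Fin n → ℤ × ℤ) : Prop :=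
  (∀ i, w i ∈ ({(1, 0), (0, 1), (-1, 1), (-1, 0), (0, -1), (1, -1), (0, 0)} : Set (ℤ × ℤ))) ∧
  (∀ m ≤ n, (partialSum w m).1 ≥ (partialSum w m).2 ∧ (partialSum w m).2 ≥ 0) ∧
  partialSum w n = (0, 0) ∧
  (∀ i : Fin n, w i = (0, 0) → (partialSum w (i : ℕ)).1 > (partialSum w (i : ℕ)).2)

/- ===================== Auxiliary development ===================== -/

noncomputable def Fp (n : ℕ) : AddMonoidAlgebra ℤ (ℤ × ℤ) := Dpoly * Kpoly ^ n

lemma ama_add_apply (f g : AddMonoidAlgebra ℤ (ℤ × ℤ)) (x : ℤ × ℤ) : (f + g) x = f x + g x :=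
  Finsupp.add_apply f.coeff g.coeff x
lemma ama_sub_apply (f g : AddMonoidAlgebra ℤ (ℤ × ℤ)) (x : ℤ × ℤ) : (f - g) x = f x - g x :=
  Finsupp.sub_apply f.coeff g.coeff x
lemma ama_neg_apply (f : AddMonoidAlgebra ℤ (ℤ × ℤ)) (x : ℤ × ℤ) : (-f) x = -(f x) :=
  Finsupp.neg_apply f.coeff x
lemma ama_single_apply (a x : ℤ × ℤ) (b : ℤ) :
    (AddMonoidAlgebra.single a b : AddMonoidAlgebra ℤ (ℤ × ℤ)) x = if a = x then b else 0 :=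
  Finsupp.single_apply

def fA : ℤ × ℤ → ℤ × ℤ := fun q => (q.2 + 1, q.1 - 1)
def fB : ℤ × ℤ → ℤ × ℤ := fun q => (q.2 - q.1 - 1, q.2)

lemma fA_inv : Function.Involutive fA := by intro q; simp [fA]
lemma fB_inv : Function.Involutive fB := by
  intro q
  have : q.2 - (q.2 - q.1 - 1) - 1 = q.1 := by ring
  simp [fB, this]

lemma mapDomain_add' (f : ℤ × ℤ → ℤ × ℤ) (v w : ℤ × ℤ →₀ ℤ) :
    Finsupp.mapDomain f (v + w) = Finsupp.mapDomain f v + Finsupp.mapDomain f w :=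
  Finsupp.mapDomain_add

lemma mapDomain_neg' (f : ℤ × ℤ → ℤ × ℤ) (v : ℤ × ℤ →₀ ℤ) :
    Finsupp.mapDomain f (-v) = -(Finsupp.mapDomain f v) :=
  (Finsupp.mapDomain.addMonoidHom f).map_neg v

lemma mapA : Finsupp.mapDomain fA Dpoly.coeff = -Dpoly.coeff := by
  have h : ∀ (a b : ℤ), Finsupp.mapDomain fA (mono a b).coeff = (mono (b+1) (a-1)).coeff := by
    intro a b; simp [mono, Finsupp.mapDomain_single, fA]
  simp only [Dpoly, sub_eq_add_neg]
  simp only [AddMonoidAlgebra.coeff_add, AddMonoidAlgebra.coeff_neg, mapDomain_add', mapDomain_neg', h]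
  norm_num
  abel

lemma mapB : Finsupp.mapDomain fB Dpoly.coeff = -Dpoly.coeff := by
  have h : ∀ (a b : ℤ), Finsupp.mapDomain fB (mono a b).coeff = (mono (b-a-1) b).coeff := by
    intro a b; simp [mono, Finsupp.mapDomain_single, fB]
  simp only [Dpoly, sub_eq_add_neg]
  simp only [AddMonoidAlgebra.coeff_add, AddMonoidAlgebra.coeff_neg, mapDomain_add', mapDomain_neg', h]
  norm_num
  abel

lemma Fp_succ_apply (n : ℕ) (a b : ℤ) :
    Fp (n+1) (a, b) = Fp n (a-1, b) + Fp n (a, b-1) + Fp n (a-1, b-1) + Fp n (a+1, b)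
      + Fp n (a, b+1) + Fp n (a+1, b+1) + Fp n (a, b) := by
  have h : Fp (n+1) = Fp n * Kpoly := by
    simp only [Fp, pow_succ, mul_assoc]
  rw [h, Kpoly]
  simp only [mono, mul_add, ama_add_apply, AddMonoidAlgebra.coeff_mul_single_apply,
    Prod.mk_sub_mk, mul_one]
  norm_num
  ring

lemma Dpoly_map_apply {f : ℤ × ℤ → ℤ × ℤ} (hinv : Function.Involutive f)
    (hmap : Finsupp.mapDomain f Dpoly.coeff = -Dpoly.coeff) (q : ℤ × ℤ) : Dpoly (f q) = -Dpoly q := by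
  have h1 : (Finsupp.mapDomain f Dpoly.coeff) (f q) = Dpoly q :=
    Finsupp.mapDomain_apply hinv.injective Dpoly.coeff q
  rw [hmap, Finsupp.neg_apply] at h1
  linarith

lemma Fp_A : ∀ n, ∀ u v : ℤ, Fp n (u, v) = -Fp n (v+1, u-1) := by
  intro n
  induction n with
  | zero =>
    intro u v
    have h0 : Fp 0 = Dpoly := by simp [Fp]
    have := Dpoly_map_apply fA_inv mapA (v+1, u-1)
    have e : fA (v+1, u-1) = (u, v) := by simp [fA]
    rw [e] at this
    rw [h0, this]
  | succ n ih =>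
    intro u v
    have h1 := ih (u-1) v
    have h2 := ih u (v-1)
    have h3 := ih (u-1) (v-1)
    have h4 := ih (u+1) v
    have h5 := ih u (v+1)
    have h6 := ih (u+1) (v+1)
    have h7 := ih u v
    rw [Fp_succ_apply, Fp_succ_apply]
    ring_nf at h1 h2 h3 h4 h5 h6 h7 ⊢
    linarith

lemma Fp_B : ∀ n, ∀ u v : ℤ, Fp n (u, v) = -Fp n (v-u-1, v) := by
  intro n
  induction n with
  | zero =>
    intro u v
    have h0 : Fp 0 = Dpoly := by simp [Fp]
    have := Dpoly_map_apply fB_inv mapB (u, v)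
    have e : fB (u, v) = (v-u-1, v) := by simp [fB]
    rw [e] at this
    rw [h0]; linarith
  | succ n ih =>
    intro u v
    have h1 := ih (u-1) v
    have h2 := ih u (v-1)
    have h3 := ih (u-1) (v-1)
    have h4 := ih (u+1) v
    have h5 := ih u (v+1)
    have h6 := ih (u+1) (v+1)
    have h7 := ih u v
    rw [Fp_succ_apply, Fp_succ_apply]
    ring_nf at h1 h2 h3 h4 h5 h6 h7 ⊢
    linarith

lemma Fp_wallA (n : ℕ) (a : ℤ) : Fp n (a, a-1) = 0 := by
  have h := Fp_A n a (a-1)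
  have e : ((a:ℤ)-1+1, a-1) = (a, a-1) := by norm_num
  rw [e] at h
  linarith

lemma Fp_wallB (n : ℕ) (a : ℤ) : Fp n (a, 2*a+1) = 0 := by
  have h := Fp_B n a (2*a+1)
  have e : ((2*a+1:ℤ)-a-1, 2*a+1) = (a, 2*a+1) := by
    simp only [Prod.mk.injEq]
    exact ⟨by ring, trivial⟩
  rw [e] at h
  linarith

lemma Dpoly_eval (a c : ℤ) (h0 : 0 ≤ a) (h1 : a ≤ c) (h2 : c ≤ 2*a) :
    Dpoly (a, c) = if a = 0 ∧ c = 0 then 1 else 0 := by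
  simp only [Dpoly, mono, ama_sub_apply, ama_add_apply, ama_single_apply, Prod.mk.injEq]
  rw [if_neg (show ¬((-1:ℤ) = a ∧ (0:ℤ) = c) by omega)]
  rw [if_neg (show ¬((-3:ℤ) = a ∧ (-1:ℤ) = c) by omega)]
  rw [if_neg (show ¬((-4:ℤ) = a ∧ (-2:ℤ) = c) by omega)]
  rw [if_neg (show ¬((-5:ℤ) = a ∧ (-4:ℤ) = c) by omega)]
  rw [if_neg (show ¬((-5:ℤ) = a ∧ (-5:ℤ) = c) by omega)]
  rw [if_neg (show ¬((-4:ℤ) = a ∧ (-6:ℤ) = c) by omega)]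
  rw [if_neg (show ¬((-3:ℤ) = a ∧ (-6:ℤ) = c) by omega)]
  rw [if_neg (show ¬((-1:ℤ) = a ∧ (-5:ℤ) = c) by omega)]
  rw [if_neg (show ¬((0:ℤ) = a ∧ (-4:ℤ) = c) by omega)]
  rw [if_neg (show ¬((1:ℤ) = a ∧ (-2:ℤ) = c) by omega)]
  rw [if_neg (show ¬((1:ℤ) = a ∧ (-1:ℤ) = c) by omega)]
  split_ifs <;> omega

def stepSet : Set (ℤ × ℤ) := {(1, 0), (0, 1), (-1, 1), (-1, 0), (0, -1), (1, -1), (0, 0)}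

def OW (n : ℕ) (p : ℤ × ℤ) (w : Fin n → ℤ × ℤ) : Prop :=
  (∀ i, w i ∈ stepSet) ∧
  (∀ m ≤ n, (partialSum w m).1 ≥ (partialSum w m).2 ∧ (partialSum w m).2 ≥ 0) ∧
  partialSum w n = p ∧
  (∀ i : Fin n, w i = (0, 0) → (partialSum w (i : ℕ)).1 > (partialSum w (i : ℕ)).2)

lemma partialSum_zero {n : ℕ} (w : Fin n → ℤ × ℤ) : partialSum w 0 = 0 := by
  simp [partialSum]

lemma partialSum_succ {n : ℕ} (w : Fin n → ℤ × ℤ) (m : ℕ) (hm : m < n) :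
    partialSum w (m + 1) = partialSum w m + w ⟨m, hm⟩ := by
  unfold partialSum
  rw [show (Finset.univ.filter (fun i : Fin n => (i : ℕ) < m + 1))
      = insert ⟨m, hm⟩ (Finset.univ.filter (fun i : Fin n => (i : ℕ) < m)) by
    ext i
    simp [Fin.ext_iff, Nat.lt_succ_iff_lt_or_eq]
    omega]
  rw [Finset.sum_insert (by simp)]
  ring

lemma partialSum_snoc_le {n : ℕ} (w : Fin n → ℤ × ℤ) (s : ℤ × ℤ) {m : ℕ} (hm : m ≤ n) :
    partialSum (Fin.snoc w s) m = partialSum w m := by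
  induction m with
  | zero => rw [partialSum_zero, partialSum_zero]
  | succ k ih =>
    have hk : k < n := hm
    rw [partialSum_succ _ k (by omega), partialSum_succ _ k hk, ih (by omega)]
    have : (⟨k, by omega⟩ : Fin (n+1)) = Fin.castSucc ⟨k, hk⟩ := rfl
    rw [this, Fin.snoc_castSucc]

lemma partialSum_snoc_top {n : ℕ} (w : Fin n → ℤ × ℤ) (s : ℤ × ℤ) :
    partialSum (Fin.snoc w s) (n + 1) = partialSum w n + s := by
  rw [partialSum_succ _ n (by omega), partialSum_snoc_le w s (le_refl n)]
  have : (⟨n, by omega⟩ : Fin (n+1)) = Fin.last n := rfl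
  rw [this, Fin.snoc_last]

def stepFin : Finset (ℤ × ℤ) := {(1, 0), (0, 1), (-1, 1), (-1, 0), (0, -1), (1, -1), (0, 0)}

lemma mem_stepFin_iff (s : ℤ × ℤ) : s ∈ stepFin ↔ s ∈ stepSet := by
  simp [stepFin, stepSet]

lemma stepSet_finite : stepSet.Finite := by
  unfold stepSet
  repeat apply Set.Finite.insert
  exact Set.finite_singleton _

instance owFinite (n : ℕ) (p : ℤ × ℤ) : Finite {w : Fin n → ℤ × ℤ // OW n p w} := by
  haveI : Finite ↥stepSet := stepSet_finite.to_subtype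
  haveI : Finite (Fin n → ↥stepSet) := inferInstance
  apply Finite.of_injective (f := fun (w : {w : Fin n → ℤ × ℤ // OW n p w}) (i : Fin n) =>
    (⟨w.1 i, w.2.1 i⟩ : ↥stepSet))
  intro w w' h
  apply Subtype.ext
  funext i
  exact congrArg Subtype.val (congrFun h i)

noncomputable def Nw (n : ℕ) (p : ℤ × ℤ) : ℕ := Nat.card {w : Fin n → ℤ × ℤ // OW n p w}

lemma OW_snoc_iff (n : ℕ) (p s : ℤ × ℤ) (u : Fin n → ℤ × ℤ) :
    OW (n+1) p (Fin.snoc u s) ↔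
      s ∈ stepSet ∧ (p.1 ≥ p.2 ∧ p.2 ≥ 0) ∧ (s = (0, 0) → p.1 > p.2) ∧ OW n (p - s) u := by
  constructor
  · rintro ⟨hstep, hreg, hend, hzero⟩
    have htop : partialSum u n + s = p := by rw [← partialSum_snoc_top u s]; exact hend
    have hps : partialSum u n = p - s := by rw [← htop]; ring
    have hlast : (Fin.snoc u s : Fin (n+1) → ℤ × ℤ) (Fin.last n) = s := by simp
    refine ⟨?_, hreg (n+1) (le_refl _) |>.imp (fun h => by rwa [hend] at h) (fun h => by rwa [hend] at h), ?_, ?_, ?_, ?_, ?_⟩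
    · rw [← hlast]; exact hstep (Fin.last n)
    · intro hs0
      have := hzero (Fin.last n) (by rw [hlast]; exact hs0)
      rw [show ((Fin.last n : Fin (n+1)) : ℕ) = n from rfl,
        partialSum_snoc_le u s (le_refl n), hps, hs0] at this
      simpa using this
    · intro i
      have : (Fin.snoc u s : Fin (n+1) → ℤ × ℤ) (Fin.castSucc i) = u i :=
        by simp
      rw [← this]; exact hstep (Fin.castSucc i)
    · intro m hm
      have := hreg m (by omega)
      rwa [partialSum_snoc_le u s hm] at this
    · exact hps
    · intro i hi
      have hcast : (Fin.snoc u s : Fin (n+1) → ℤ × ℤ) (Fin.castSucc i) = u i :=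
        by simp
      have := hzero (Fin.castSucc i) (by rw [hcast]; exact hi)
      rwa [show ((Fin.castSucc i : Fin (n+1)) : ℕ) = (i : ℕ) from rfl,
        partialSum_snoc_le u s (by omega : (i : ℕ) ≤ n)] at this
  · rintro ⟨hs, hp, hz, hstep, hreg, hend, hzero⟩
    have hlast : (Fin.snoc u s : Fin (n+1) → ℤ × ℤ) (Fin.last n) = s := by simp
    have hcast : ∀ i : Fin n, (Fin.snoc u s : Fin (n+1) → ℤ × ℤ) (Fin.castSucc i) = u i :=
      fun i => by simp
    have htop : partialSum (Fin.snoc u s) (n+1) = p := by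
      rw [partialSum_snoc_top u s, hend]; ring
    refine ⟨?_, ?_, htop, ?_⟩
    · intro i
      induction i using Fin.lastCases with
      | last => rwa [hlast]
      | cast j => rw [hcast j]; exact hstep j
    · intro m hm
      rcases Nat.lt_or_ge m (n+1) with h | h
      · have hmn : m ≤ n := by omega
        rw [partialSum_snoc_le u s hmn]
        exact hreg m hmn
      · have : m = n + 1 := by omega
        rw [this, htop]; exact hp
    · intro i
      induction i using Fin.lastCases with
      | last =>
        intro hs0
        rw [hlast] at hs0
        rw [show ((Fin.last n : Fin (n+1)) : ℕ) = n from rfl,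
          partialSum_snoc_le u s (le_refl n), hend]
        have h1 := hz hs0
        have h2 : p - s = p := by rw [hs0, show ((0:ℤ),(0:ℤ)) = (0 : ℤ×ℤ) from rfl, sub_zero]
        rw [h2]
        exact h1
      | cast j =>
        intro hj
        rw [hcast j] at hj
        rw [show ((Fin.castSucc j : Fin (n+1)) : ℕ) = (j : ℕ) from rfl,
          partialSum_snoc_le u s (by omega : (j : ℕ) ≤ n)]
        exact hzero j hj

lemma Nw_zero (p : ℤ × ℤ) : Nw 0 p = if p = 0 then 1 else 0 := by
  unfold Nw
  split_ifs with h
  · subst h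
    have hU : ∀ w : Fin 0 → ℤ × ℤ, OW 0 0 w := by
      intro w
      refine ⟨fun i => i.elim0, ?_, ?_, fun i => i.elim0⟩
      · intro m hm
        interval_cases m
        rw [partialSum_zero]
        exact ⟨le_refl 0, le_refl 0⟩
      · exact partialSum_zero w
    haveI : Unique {w : Fin 0 → ℤ × ℤ // OW 0 0 w} :=
      { default := ⟨fun i => i.elim0, hU _⟩,
        uniq := fun w => Subtype.ext (funext fun i => i.elim0) }
    exact Nat.card_unique
  · haveI : IsEmpty {w : Fin 0 → ℤ × ℤ // OW 0 p w} := by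
      constructor
      rintro ⟨w, _, _, hend, _⟩
      rw [partialSum_zero] at hend
      exact h hend.symm
    exact Nat.card_of_isEmpty

lemma Nw_notin (n : ℕ) (p : ℤ × ℤ) (h : ¬(p.1 ≥ p.2 ∧ p.2 ≥ 0)) : Nw n p = 0 := by
  unfold Nw
  haveI : IsEmpty {w : Fin n → ℤ × ℤ // OW n p w} := by
    constructor
    rintro ⟨w, _, hreg, hend, _⟩
    exact h (hend ▸ hreg n (le_refl n))
  exact Nat.card_of_isEmpty

lemma nat_card_sigma {ι : Type*} [Fintype ι] (f : ι → Type*) [∀ i, Finite (f i)] :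
    Nat.card (Σ i, f i) = ∑ i, Nat.card (f i) := by
  letI : ∀ i, Fintype (f i) := fun i => Fintype.ofFinite _
  simp [Nat.card_eq_fintype_card]

def Lfin (p : ℤ × ℤ) : Finset (ℤ × ℤ) :=
  stepFin.filter (fun s => s = (0, 0) → p.1 > p.2)

lemma card_succ (n : ℕ) (p : ℤ × ℤ) (hp : p.1 ≥ p.2 ∧ p.2 ≥ 0) :
    Nw (n+1) p = ∑ s ∈ Lfin p, Nw n (p - s) := by
  classical
  have decomp : ∀ w : {w : Fin (n+1) → ℤ × ℤ // OW (n+1) p w},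
      w.1 (Fin.last n) ∈ Lfin p ∧ OW n (p - w.1 (Fin.last n)) (Fin.init w.1) := by
    rintro ⟨w, hw⟩
    have hw' : OW (n+1) p (Fin.snoc (Fin.init w) (w (Fin.last n))) := by
      rwa [Fin.snoc_init_self]
    rw [OW_snoc_iff] at hw'
    refine ⟨?_, hw'.2.2.2⟩
    simp only [Lfin, Finset.mem_filter, mem_stepFin_iff]
    exact ⟨hw'.1, hw'.2.2.1⟩
  set f : {w : Fin (n+1) → ℤ × ℤ // OW (n+1) p w} → ↥(Lfin p) :=
    fun w => ⟨w.1 (Fin.last n), (decomp w).1⟩ with hf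
  have e1 : {w : Fin (n+1) → ℤ × ℤ // OW (n+1) p w} ≃ Σ s : ↥(Lfin p), {w' // f w' = s} :=
    (Equiv.sigmaFiberEquiv f).symm
  have e2 : ∀ s : ↥(Lfin p), {w' // f w' = s} ≃ {u : Fin n → ℤ × ℤ // OW n (p - (s : ℤ × ℤ)) u} := by
    intro s
    refine ⟨fun w' => ⟨Fin.init w'.1.1, ?_⟩, fun u => ⟨⟨Fin.snoc u.1 (s : ℤ × ℤ), ?_⟩, ?_⟩, ?_, ?_⟩
    · have := (decomp w'.1).2
      rw [show (w'.1.1 (Fin.last n)) = ((s : ℤ × ℤ)) from congrArg Subtype.val w'.2] at this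
      exact this
    · rw [OW_snoc_iff]
      have hsmem := s.2
      simp only [Lfin, Finset.mem_filter, mem_stepFin_iff] at hsmem
      exact ⟨hsmem.1, hp, hsmem.2, u.2⟩
    · apply Subtype.ext
      simp [hf]
    · rintro ⟨⟨w, hw⟩, hws⟩
      apply Subtype.ext
      apply Subtype.ext
      show Fin.snoc (Fin.init w) _ = w
      have : (s : ℤ × ℤ) = w (Fin.last n) := (congrArg Subtype.val hws).symm
      rw [this, Fin.snoc_init_self]
    · rintro ⟨u, hu⟩
      apply Subtype.ext
      simp
  calc Nat.card {w : Fin (n+1) → ℤ × ℤ // OW (n+1) p w}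
      = Nat.card (Σ s : ↥(Lfin p), {w' // f w' = s}) := Nat.card_congr e1
    _ = ∑ s : ↥(Lfin p), Nat.card {w' // f w' = s} := nat_card_sigma _
    _ = ∑ s : ↥(Lfin p), Nw n (p - (s : ℤ × ℤ)) := by
        apply Finset.sum_congr rfl
        intro s _
        exact Nat.card_congr (e2 s)
    _ = ∑ s ∈ Lfin p, Nw n (p - s) := Finset.sum_coe_sort (Lfin p) (fun s => Nw n (p - s))

lemma Nw_succ (n : ℕ) (a b : ℤ) (h1 : a ≥ b) (h2 : b ≥ 0) :
    Nw (n+1) (a, b) = Nw n (a-1, b) + Nw n (a, b-1) + Nw n (a+1, b-1) + Nw n (a+1, b)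
      + Nw n (a, b+1) + Nw n (a-1, b+1) + (if a > b then Nw n (a, b) else 0) := by
  rw [card_succ n (a, b) ⟨h1, h2⟩]
  by_cases hab : a > b
  · rw [if_pos hab]
    have hL : Lfin (a, b) = stepFin := by
      rw [Lfin]
      apply Finset.filter_true_of_mem
      intro s _ _
      exact hab
    rw [hL, stepFin]
    rw [Finset.sum_insert (by decide), Finset.sum_insert (by decide),
      Finset.sum_insert (by decide), Finset.sum_insert (by decide),
      Finset.sum_insert (by decide), Finset.sum_insert (by decide), Finset.sum_singleton]
    norm_num [Prod.mk_sub_mk]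
    ring
  · rw [if_neg hab]
    have hab' : a = b := le_antisymm (by omega) h1
    have hL : Lfin (a, b) = ({(1,0),(0,1),(-1,1),(-1,0),(0,-1),(1,-1)} : Finset (ℤ×ℤ)) := by
      rw [Lfin, stepFin]
      ext s
      simp only [Finset.mem_filter, Finset.mem_insert, Finset.mem_singleton]
      constructor
      · rintro ⟨hmem, hz⟩
        rcases hmem with h|h|h|h|h|h|h
        · exact Or.inl h
        · exact Or.inr (Or.inl h)
        · exact Or.inr (Or.inr (Or.inl h))
        · exact Or.inr (Or.inr (Or.inr (Or.inl h)))
        · exact Or.inr (Or.inr (Or.inr (Or.inr (Or.inl h))))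
        · exact Or.inr (Or.inr (Or.inr (Or.inr (Or.inr h))))
        · exact absurd (hz h) hab
      · intro h
        refine ⟨?_, ?_⟩
        · tauto
        · intro h0
          exfalso
          rcases h with h|h|h|h|h|h <;> rw [h0] at h <;> simp [Prod.ext_iff] at h
    rw [hL]
    rw [Finset.sum_insert (by decide), Finset.sum_insert (by decide),
      Finset.sum_insert (by decide), Finset.sum_insert (by decide),
      Finset.sum_insert (by decide), Finset.sum_singleton]
    norm_num [Prod.mk_sub_mk]
    ring

lemma main_ind : ∀ n : ℕ, ∀ a b : ℤ, a ≥ b → b ≥ 0 → (Nw n (a, b) : ℤ) = Fp n (a, a + b) := by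
  intro n
  induction n with
  | zero =>
    intro a b h1 h2
    have h0 : Fp 0 = Dpoly := by simp [Fp]
    rw [Nw_zero, h0, Dpoly_eval a (a+b) (by omega) (by omega) (by omega)]
    have hz : ((a, b) = (0 : ℤ × ℤ)) ↔ (a = 0 ∧ b = 0) := by
      constructor
      · intro h
        have := congrArg Prod.fst h
        have := congrArg Prod.snd h
        exact ⟨by assumption, by assumption⟩
      · rintro ⟨rfl, rfl⟩; rfl
    by_cases h : a = 0 ∧ b = 0
    · rw [if_pos (hz.mpr h), if_pos (by omega)]
      norm_num
    · rw [if_neg (fun hc => h (hz.mp hc)), if_neg (by omega)]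
      norm_num
  | succ n ih =>
    intro a b h1 h2
    rw [Nw_succ n a b h1 h2, Fp_succ_apply n a (a+b)]
    rcases (show b = 0 ∨ b > 0 by omega) with hb | hb
    · subst hb
      rcases (show a = 0 ∨ a = 1 ∨ a > 1 by omega) with ha | ha | ha
      · -- a = 0, b = 0
        subst ha
        rw [if_neg (by omega)]
        have i4 := ih 1 0 (by omega) (by omega)
        have o1 := Nw_notin n (-1, 0) (by dsimp only; omega)
        have o2 := Nw_notin n (0, -1) (by dsimp only; omega)
        have o3 := Nw_notin n (1, -1) (by dsimp only; omega)
        have o5 := Nw_notin n (0, 1) (by dsimp only; omega)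
        have o6 := Nw_notin n (-1, 1) (by dsimp only; omega)
        have w1 := Fp_wallB n (-1)
        have w2 := Fp_wallA n 0
        have w3 := Fp_wallA n 1
        have w5 := Fp_wallB n 0
        have pr := Fp_B n (-1) 0
        push_cast
        ring_nf at i4 o1 o2 o3 o5 o6 w1 w2 w3 w5 pr ⊢
        simp only [o1, o2, o3, o5, o6, Nat.cast_zero] at *
        linarith
      · -- a = 1, b = 0
        subst ha
        rw [if_pos (by omega)]
        have i1 := ih 0 0 (by omega) (by omega)
        have i4 := ih 2 0 (by omega) (by omega)
        have i5 := ih 1 1 (by omega) (by omega)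
        have i7 := ih 1 0 (by omega) (by omega)
        have o2 := Nw_notin n (1, -1) (by dsimp only; omega)
        have o3 := Nw_notin n (2, -1) (by dsimp only; omega)
        have o6 := Nw_notin n (0, 1) (by dsimp only; omega)
        have w2 := Fp_wallA n 1
        have w3 := Fp_wallA n 2
        have w6 := Fp_wallB n 0
        push_cast
        ring_nf at i1 i4 i5 i7 o2 o3 o6 w2 w3 w6 ⊢
        simp only [o2, o3, o6, Nat.cast_zero] at *
        linarith
      · -- a > 1, b = 0
        rw [if_pos (by omega)]
        have i1 := ih (a-1) 0 (by omega) (by omega)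
        have i4 := ih (a+1) 0 (by omega) (by omega)
        have i5 := ih a 1 (by omega) (by omega)
        have i6 := ih (a-1) 1 (by omega) (by omega)
        have i7 := ih a 0 (by omega) (by omega)
        have o2 := Nw_notin n (a, -1) (by dsimp only; omega)
        have o3 := Nw_notin n (a+1, -1) (by dsimp only; omega)
        have w2 := Fp_wallA n a
        have w3 := Fp_wallA n (a+1)
        push_cast
        ring_nf at i1 i4 i5 i6 i7 o2 o3 w2 w3 ⊢
        simp only [o2, o3, Nat.cast_zero] at *
        linarith
    · rcases (show a = b ∨ a = b + 1 ∨ a > b + 1 by omega) with ha | ha | ha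
      · -- a = b > 0
        subst ha
        rw [if_neg (by omega)]
        have i2 := ih a (a-1) (by omega) (by omega)
        have i3 := ih (a+1) (a-1) (by omega) (by omega)
        have i4 := ih (a+1) a (by omega) (by omega)
        have o1 := Nw_notin n (a-1, a) (by dsimp only; omega)
        have o5 := Nw_notin n (a, a+1) (by dsimp only; omega)
        have o6 := Nw_notin n (a-1, a+1) (by dsimp only; omega)
        have w1 := Fp_wallB n (a-1)
        have w5 := Fp_wallB n a
        have pr := Fp_B n (a-1) (2*a)
        push_cast
        ring_nf at i2 i3 i4 o1 o5 o6 w1 w5 pr ⊢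
        simp only [o1, o5, o6, Nat.cast_zero] at *
        linarith
      · -- a = b + 1, b > 0
        subst ha
        rw [if_pos (by omega)]
        have i1 := ih b b (by omega) (by omega)
        have i2 := ih (b+1) (b-1) (by omega) (by omega)
        have i3 := ih (b+2) (b-1) (by omega) (by omega)
        have i4 := ih (b+2) b (by omega) (by omega)
        have i5 := ih (b+1) (b+1) (by omega) (by omega)
        have i7 := ih (b+1) b (by omega) (by omega)
        have o6 := Nw_notin n (b, b+1) (by dsimp only; omega)
        have w6 := Fp_wallB n b
        push_cast
        ring_nf at i1 i2 i3 i4 i5 i7 o6 w6 ⊢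
        simp only [o6, Nat.cast_zero] at *
        linarith
      · -- a > b + 1, b > 0
        rw [if_pos (by omega)]
        have i1 := ih (a-1) b (by omega) (by omega)
        have i2 := ih a (b-1) (by omega) (by omega)
        have i3 := ih (a+1) (b-1) (by omega) (by omega)
        have i4 := ih (a+1) b (by omega) (by omega)
        have i5 := ih a (b+1) (by omega) (by omega)
        have i6 := ih (a-1) (b+1) (by omega) (by omega)
        have i7 := ih a b (by omega) (by omega)
        push_cast
        ring_nf at i1 i2 i3 i4 i5 i6 i7 ⊢
        linarith

/-- For every `n ≥ 0`, the number of octant walks of length `n` from `(0,0)` to `(0,0)`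
equals `T₃(n)`. -/
theorem card_octantWalks_eq_T3 (n : ℕ) :
    (Nat.card {w : Fin n → ℤ × ℤ // IsOctantWalk w} : ℤ) = T3 n := by
  have hcongr : Nat.card {w : Fin n → ℤ × ℤ // IsOctantWalk w}
      = Nat.card {w : Fin n → ℤ × ℤ // OW n (0, 0) w} :=
    Nat.card_congr (Equiv.subtypeEquivRight (fun w => Iff.rfl))
  have h := main_ind n 0 0 (le_refl 0) (le_refl 0)
  rw [hcongr]
  show ((Nw n (0, 0) : ℕ) : ℤ) = T3 n
  rw [h]
  norm_num
  rfl
end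

section
/- The sequence C₂(n) = S₃(n) satisfies C₂(0) = 1, C₂(1) = 3, and for all n ≥ 0 the recurrence (n+5)(n+6)·C₂(n+2) − 2(5n² + 36n + 61)·C₂(n+1) + 9(n+1)(n+4)·C₂(n) = 0. -/
open scoped BigOperators

/-- `K_k = k + x + y + x⁻¹ + y⁻¹ + xy⁻¹ + yx⁻¹`. -/
noncomputable def Kq (k : ℕ) : AddMonoidAlgebra ℤ (ℤ × ℤ) :=
  AddMonoidAlgebra.single (0, 0) (k : ℤ)
  + mono 1 0 + mono 0 1 + mono (-1) 0 + mono 0 (-1) + mono 1 (-1) + mono (-1) 1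

/-- `W = 1 − x²y⁻¹ + x³ − x²y² + y³ − y²x⁻¹`. -/
noncomputable def Wq : AddMonoidAlgebra ℤ (ℤ × ℤ) :=
  mono 0 0 - mono 2 (-1) + mono 3 0 - mono 2 2 + mono 0 3 - mono (-1) 2

/-- `S_k(n)` is the constant term (coefficient of `x⁰y⁰`) of `W·K_kⁿ`. -/
noncomputable def Sq (k : ℕ) (n : ℕ) : ℤ := (Wq * Kq k ^ n).coeff (0, 0)

namespace S3X

abbrev R : Type := AddMonoidAlgebra ℤ (ℤ × ℤ)

lemma mono_mul (a b c d : ℤ) : mono a b * mono c d = mono (a+c) (b+d) := by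
  simp [mono, AddMonoidAlgebra.single_mul_single, Prod.mk_add_mk]

lemma mono_zero : mono 0 0 = (1 : R) := rfl

lemma mono_pow (k : ℕ) (a b : ℤ) : mono a b ^ k = mono (k*a) (k*b) := by
  induction k with
  | zero => simp [mono_zero]
  | succ m ih => rw [pow_succ, ih, mono_mul]; push_cast; ring_nf

lemma cast_mul_mono (c a b : ℤ) : ((c : R)) * mono a b = AddMonoidAlgebra.single ((a,b) : ℤ×ℤ) c := by
  rw [AddMonoidAlgebra.intCast_def]
  simp [mono, AddMonoidAlgebra.single_mul_single]

/- weighted derivations -/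
noncomputable def Dw (w : (ℤ×ℤ) →+ ℤ) (f : R) : R := f.coeff.sum fun p c => AddMonoidAlgebra.single p (w p * c)

lemma dw_single (w : (ℤ×ℤ) →+ ℤ) (p : ℤ×ℤ) (c : ℤ) :
    Dw w (AddMonoidAlgebra.single p c) = AddMonoidAlgebra.single p (w p * c) := by
  unfold Dw; rw [AddMonoidAlgebra.coeff_single, Finsupp.sum_single_index]; simp

lemma dw_add (w : (ℤ×ℤ) →+ ℤ) (f g : R) : Dw w (f + g) = Dw w f + Dw w g := by
  unfold Dw
  rw [AddMonoidAlgebra.coeff_add, Finsupp.sum_add_index]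
  · intro p _; simp
  · intro p _ c d; rw [mul_add]; exact AddMonoidAlgebra.single_add _ _ _

lemma dw_apply (w : (ℤ×ℤ) →+ ℤ) (f : R) (q : ℤ×ℤ) : (Dw w f).coeff q = w q * f.coeff q := by
  unfold Dw
  rw [AddMonoidAlgebra.coeff_finsuppSum, Finsupp.sum_apply]
  classical
  rw [Finsupp.sum]
  rw [Finset.sum_eq_single q]
  · rw [AddMonoidAlgebra.coeff_single, Finsupp.single_eq_same]
  · intro p _ hne; simp [AddMonoidAlgebra.coeff_single, Finsupp.single_apply, hne]
  · intro h; simp [Finsupp.notMem_support_iff.mp h]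

lemma dw_zero_apply (w : (ℤ×ℤ) →+ ℤ) (f : R) : (Dw w f).coeff ((0:ℤ),(0:ℤ)) = 0 := by
  rw [dw_apply]
  have h : w ((0:ℤ),(0:ℤ)) = 0 := by
    have h0 := map_zero w
    simpa [Prod.mk_zero_zero] using h0
  rw [h, zero_mul]

lemma dw_mul (w : (ℤ×ℤ) →+ ℤ) (f g : R) : Dw w (f * g) = Dw w f * g + f * Dw w g := by
  classical
  induction f using AddMonoidAlgebra.induction_linear with
  | zero => simp [Dw, Finsupp.sum_zero_index]
  | add a b ha hb => rw [add_mul, dw_add, ha, hb, dw_add]; ring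
  | single p c =>
    induction g using AddMonoidAlgebra.induction_linear with
    | zero =>
      show Dw w ((AddMonoidAlgebra.single p c : R) * 0) = _
      simp [Dw, Finsupp.sum_zero_index]
    | add a b ha hb => rw [mul_add, dw_add, ha, hb, dw_add]; ring
    | single q d =>
      show Dw w ((AddMonoidAlgebra.single p c : R) * AddMonoidAlgebra.single q d) = _
      rw [AddMonoidAlgebra.single_mul_single, dw_single, dw_single, dw_single,
        AddMonoidAlgebra.single_mul_single, AddMonoidAlgebra.single_mul_single, map_add w]
      rw [← AddMonoidAlgebra.single_add]
      congr 1
      ring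

lemma dw_pow (w : (ℤ×ℤ) →+ ℤ) (f : R) (m : ℕ) :
    Dw w (f ^ (m+1)) = ((m:R)+1) * (f ^ m * Dw w f) := by
  induction m with
  | zero => simp [dw_mul]
  | succ k ih =>
    rw [pow_succ, dw_mul, ih, pow_succ]
    push_cast
    ring

noncomputable def DX : R → R := Dw (AddMonoidHom.fst ℤ ℤ)
noncomputable def DY : R → R := Dw (AddMonoidHom.snd ℤ ℤ)

lemma dxadd (f g : R) : DX (f + g) = DX f + DX g := dw_add _ f g
lemma dyadd (f g : R) : DY (f + g) = DY f + DY g := dw_add _ f g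
lemma dxmul (f g : R) : DX (f * g) = DX f * g + f * DX g := dw_mul _ f g
lemma dymul (f g : R) : DY (f * g) = DY f * g + f * DY g := dw_mul _ f g
lemma dxpow (f : R) (m : ℕ) : DX (f ^ (m+1)) = ((m:R)+1) * (f ^ m * DX f) := dw_pow _ f m
lemma dypow (f : R) (m : ℕ) : DY (f ^ (m+1)) = ((m:R)+1) * (f ^ m * DY f) := dw_pow _ f m
lemma dx0 (f : R) : (DX f).coeff ((0:ℤ),(0:ℤ)) = 0 := dw_zero_apply _ f
lemma dy0 (f : R) : (DY f).coeff ((0:ℤ),(0:ℤ)) = 0 := dw_zero_apply _ f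

lemma dx_term (c a b : ℤ) : DX ((c:R) * mono a b) = ((a * c : ℤ) : R) * mono a b := by
  rw [cast_mul_mono, cast_mul_mono]; unfold DX; rw [dw_single]; rfl

lemma dy_term (c a b : ℤ) : DY ((c:R) * mono a b) = ((b * c : ℤ) : R) * mono a b := by
  rw [cast_mul_mono, cast_mul_mono]; unfold DY; rw [dw_single]; rfl

lemma dx_mono (a b : ℤ) : DX (mono a b) = ((a : ℤ) : R) * mono a b := by
  have h := dx_term 1 a b
  simpa using h

lemma dy_mono (a b : ℤ) : DY (mono a b) = ((b : ℤ) : R) * mono a b := by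
  have h := dy_term 1 a b
  simpa using h

lemma dx_single00 (c : ℤ) : DX (AddMonoidAlgebra.single ((0,0) : ℤ×ℤ) c) = 0 := by
  unfold DX; rw [dw_single]; simp

lemma dy_single00 (c : ℤ) : DY (AddMonoidAlgebra.single ((0,0) : ℤ×ℤ) c) = 0 := by
  unfold DY; rw [dw_single]; simp

/- the rotation automorphism -/
def rotE : (ℤ×ℤ) ≃+ (ℤ×ℤ) where
  toFun p := (-p.2, p.1 + p.2)
  invFun p := (p.1 + p.2, -p.1)
  left_inv p := by simp
  right_inv p := by simp
  map_add' p q := by simp [Prod.ext_iff]; ring_nf; simp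

noncomputable def RT : R ≃ₐ[ℤ] R := AddMonoidAlgebra.domCongr ℤ ℤ rotE

lemma rt_mono (a b : ℤ) : RT (mono a b) = mono (-b) (a+b) := by
  unfold RT mono
  rw [AddMonoidAlgebra.domCongr_single]
  rfl

lemma rt_single00 (c : ℤ) :
    RT (AddMonoidAlgebra.single ((0,0) : ℤ×ℤ) c) = AddMonoidAlgebra.single ((0,0) : ℤ×ℤ) c := by
  unfold RT
  rw [AddMonoidAlgebra.domCongr_single]
  norm_num [rotE]

lemma rt_apply0 (f : R) : (RT f).coeff ((0:ℤ),(0:ℤ)) = f.coeff ((0:ℤ),(0:ℤ)) := by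
  unfold RT
  rw [AddMonoidAlgebra.coeff_domCongr]
  norm_num [rotE]

/- evaluation lemmas -/
lemma eval_add (f g : R) (p : ℤ×ℤ) : (f + g).coeff p = f.coeff p + g.coeff p := by
  rw [AddMonoidAlgebra.coeff_add]; rfl

lemma eval_sub (f g : R) (p : ℤ×ℤ) : (f - g).coeff p = f.coeff p - g.coeff p := by
  rw [AddMonoidAlgebra.coeff_sub]; rfl

lemma eval_cast_mul (c : ℤ) (f : R) (p : ℤ×ℤ) : ((c:R) * f).coeff p = c * f.coeff p := by
  rw [AddMonoidAlgebra.intCast_def]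
  have h := AddMonoidAlgebra.coeff_single_zero_mul f ((c:ℤ):ℤ) p
  simpa using h

/- Laurent generators -/
noncomputable def u : R := mono 1 0
noncomputable def v : R := mono 0 1
noncomputable def u' : R := mono (-1) 0
noncomputable def v' : R := mono 0 (-1)

lemma hu : u * u' = 1 := by rw [u, u', mono_mul]; norm_num [mono_zero]
lemma hv : v * v' = 1 := by rw [v, v', mono_mul]; norm_num [mono_zero]

lemma hKq : Kq 3 = (3:R) + u + v + u' + v' + u*v' + u'*v := by
  rw [Kq, u, v, u', v', mono_mul, mono_mul]
  rw [show ((3:ℕ):ℤ) = (3:ℤ) by norm_num]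
  rw [show (AddMonoidAlgebra.single ((0,0):ℤ×ℤ) (3:ℤ) : R) = (3:R) * mono 0 0 from (cast_mul_mono 3 0 0).symm]
  rw [mono_zero]
  norm_num

lemma hWq : Wq = 1 - u^2*v' + u^3 - u^2*v^2 + v^3 - u'*v^2 := by
  rw [Wq, mono_zero]
  rw [show mono 2 (-1) = u^2*v' from by rw [u, v', mono_pow, mono_mul]; norm_num]
  rw [show mono 3 0 = u^3 from by rw [u, mono_pow]; norm_num]
  rw [show mono 2 2 = u^2*v^2 from by rw [u, v, mono_pow, mono_pow, mono_mul]; norm_num]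
  rw [show mono 0 3 = v^3 from by rw [v, mono_pow]; norm_num]
  rw [show mono (-1) 2 = u'*v^2 from by rw [u', v, mono_pow, mono_mul]; norm_num]

lemma eval_mono (a b : ℤ) :
    (mono a b).coeff ((0:ℤ),(0:ℤ)) = if ((a,b) : ℤ×ℤ) = ((0:ℤ),(0:ℤ)) then (1:ℤ) else 0 := by
  have h : (mono a b).coeff ((0:ℤ),(0:ℤ)) = Finsupp.single ((a,b) : ℤ×ℤ) (1:ℤ) ((0:ℤ),(0:ℤ)) := rfl
  rw [h, Finsupp.single_apply]

lemma wd0 : mono (-4) (-2) = u'^4*v'^2 := by rw [u', v', mono_pow, mono_pow, mono_mul]; norm_num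

lemma wd1 : mono (-4) (-1) = u'^4*v' := by rw [u', v', mono_pow, mono_mul]; norm_num

lemma wd2 : mono (-4) 0 = u'^4 := by rw [u', mono_pow]; norm_num

lemma wd3 : mono (-4) 1 = u'^4*v := by rw [u', v, mono_pow, mono_mul]; norm_num

lemma wd4 : mono (-4) 2 = u'^4*v^2 := by rw [u', v, mono_pow, mono_pow, mono_mul]; norm_num

lemma wd5 : mono (-4) 3 = u'^4*v^3 := by rw [u', v, mono_pow, mono_pow, mono_mul]; norm_num

lemma wd6 : mono (-4) 4 = u'^4*v^4 := by rw [u', v, mono_pow, mono_pow, mono_mul]; norm_num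

lemma wd7 : mono (-3) (-3) = u'^3*v'^3 := by rw [u', v', mono_pow, mono_pow, mono_mul]; norm_num

lemma wd8 : mono (-3) (-2) = u'^3*v'^2 := by rw [u', v', mono_pow, mono_pow, mono_mul]; norm_num

lemma wd9 : mono (-3) (-1) = u'^3*v' := by rw [u', v', mono_pow, mono_mul]; norm_num

lemma wd10 : mono (-3) 0 = u'^3 := by rw [u', mono_pow]; norm_num

lemma wd11 : mono (-3) 1 = u'^3*v := by rw [u', v, mono_pow, mono_mul]; norm_num

lemma wd12 : mono (-3) 2 = u'^3*v^2 := by rw [u', v, mono_pow, mono_pow, mono_mul]; norm_num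

lemma wd13 : mono (-3) 3 = u'^3*v^3 := by rw [u', v, mono_pow, mono_pow, mono_mul]; norm_num

lemma wd14 : mono (-3) 4 = u'^3*v^4 := by rw [u', v, mono_pow, mono_pow, mono_mul]; norm_num

lemma wd15 : mono (-2) (-4) = u'^2*v'^4 := by rw [u', v', mono_pow, mono_pow, mono_mul]; norm_num

lemma wd16 : mono (-2) (-3) = u'^2*v'^3 := by rw [u', v', mono_pow, mono_pow, mono_mul]; norm_num

lemma wd17 : mono (-2) (-2) = u'^2*v'^2 := by rw [u', v', mono_pow, mono_pow, mono_mul]; norm_num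

lemma wd18 : mono (-2) (-1) = u'^2*v' := by rw [u', v', mono_pow, mono_mul]; norm_num

lemma wd19 : mono (-2) 0 = u'^2 := by rw [u', mono_pow]; norm_num

lemma wd20 : mono (-2) 1 = u'^2*v := by rw [u', v, mono_pow, mono_mul]; norm_num

lemma wd21 : mono (-2) 2 = u'^2*v^2 := by rw [u', v, mono_pow, mono_pow, mono_mul]; norm_num

lemma wd22 : mono (-2) 3 = u'^2*v^3 := by rw [u', v, mono_pow, mono_pow, mono_mul]; norm_num

lemma wd23 : mono (-2) 4 = u'^2*v^4 := by rw [u', v, mono_pow, mono_pow, mono_mul]; norm_num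

lemma wd24 : mono (-2) 5 = u'^2*v^5 := by rw [u', v, mono_pow, mono_pow, mono_mul]; norm_num

lemma wd25 : mono (-1) (-4) = u'*v'^4 := by rw [u', v', mono_pow, mono_mul]; norm_num

lemma wd26 : mono (-1) (-3) = u'*v'^3 := by rw [u', v', mono_pow, mono_mul]; norm_num

lemma wd27 : mono (-1) (-2) = u'*v'^2 := by rw [u', v', mono_pow, mono_mul]; norm_num

lemma wd28 : mono (-1) (-1) = u'*v' := by rw [u', v', mono_mul]; norm_num

lemma wd29 : mono (-1) 0 = u' := rfl

lemma wd30 : mono (-1) 1 = u'*v := by rw [u', v, mono_mul]; norm_num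

lemma wd31 : mono (-1) 2 = u'*v^2 := by rw [u', v, mono_pow, mono_mul]; norm_num

lemma wd32 : mono (-1) 3 = u'*v^3 := by rw [u', v, mono_pow, mono_mul]; norm_num

lemma wd33 : mono (-1) 4 = u'*v^4 := by rw [u', v, mono_pow, mono_mul]; norm_num

lemma wd34 : mono (-1) 5 = u'*v^5 := by rw [u', v, mono_pow, mono_mul]; norm_num

lemma wd35 : mono 0 (-4) = v'^4 := by rw [v', mono_pow]; norm_num

lemma wd36 : mono 0 (-3) = v'^3 := by rw [v', mono_pow]; norm_num

lemma wd37 : mono 0 (-2) = v'^2 := by rw [v', mono_pow]; norm_num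

lemma wd38 : mono 0 (-1) = v' := rfl

lemma wd39 : mono 0 1 = v := rfl

lemma wd40 : mono 0 2 = v^2 := by rw [v, mono_pow]; norm_num

lemma wd41 : mono 0 3 = v^3 := by rw [v, mono_pow]; norm_num

lemma wd42 : mono 0 4 = v^4 := by rw [v, mono_pow]; norm_num

lemma wd43 : mono 0 5 = v^5 := by rw [v, mono_pow]; norm_num

lemma wd44 : mono 1 (-4) = u*v'^4 := by rw [u, v', mono_pow, mono_mul]; norm_num

lemma wd45 : mono 1 (-3) = u*v'^3 := by rw [u, v', mono_pow, mono_mul]; norm_num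

lemma wd46 : mono 1 (-2) = u*v'^2 := by rw [u, v', mono_pow, mono_mul]; norm_num

lemma wd47 : mono 1 (-1) = u*v' := by rw [u, v', mono_mul]; norm_num

lemma wd48 : mono 1 0 = u := rfl

lemma wd49 : mono 1 1 = u*v := by rw [u, v, mono_mul]; norm_num

lemma wd50 : mono 1 2 = u*v^2 := by rw [u, v, mono_pow, mono_mul]; norm_num

lemma wd51 : mono 1 3 = u*v^3 := by rw [u, v, mono_pow, mono_mul]; norm_num

lemma wd52 : mono 1 4 = u*v^4 := by rw [u, v, mono_pow, mono_mul]; norm_num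

lemma wd53 : mono 1 5 = u*v^5 := by rw [u, v, mono_pow, mono_mul]; norm_num

lemma wd54 : mono 2 (-4) = u^2*v'^4 := by rw [u, v', mono_pow, mono_pow, mono_mul]; norm_num

lemma wd55 : mono 2 (-3) = u^2*v'^3 := by rw [u, v', mono_pow, mono_pow, mono_mul]; norm_num

lemma wd56 : mono 2 (-2) = u^2*v'^2 := by rw [u, v', mono_pow, mono_pow, mono_mul]; norm_num

lemma wd57 : mono 2 (-1) = u^2*v' := by rw [u, v', mono_pow, mono_mul]; norm_num

lemma wd58 : mono 2 0 = u^2 := by rw [u, mono_pow]; norm_num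

lemma wd59 : mono 2 1 = u^2*v := by rw [u, v, mono_pow, mono_mul]; norm_num

lemma wd60 : mono 2 2 = u^2*v^2 := by rw [u, v, mono_pow, mono_pow, mono_mul]; norm_num

lemma wd61 : mono 2 3 = u^2*v^3 := by rw [u, v, mono_pow, mono_pow, mono_mul]; norm_num

lemma wd62 : mono 2 4 = u^2*v^4 := by rw [u, v, mono_pow, mono_pow, mono_mul]; norm_num

lemma wd63 : mono 3 (-4) = u^3*v'^4 := by rw [u, v', mono_pow, mono_pow, mono_mul]; norm_num

lemma wd64 : mono 3 (-3) = u^3*v'^3 := by rw [u, v', mono_pow, mono_pow, mono_mul]; norm_num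

lemma wd65 : mono 3 (-2) = u^3*v'^2 := by rw [u, v', mono_pow, mono_pow, mono_mul]; norm_num

lemma wd66 : mono 3 (-1) = u^3*v' := by rw [u, v', mono_pow, mono_mul]; norm_num

lemma wd67 : mono 3 0 = u^3 := by rw [u, mono_pow]; norm_num

lemma wd68 : mono 3 1 = u^3*v := by rw [u, v, mono_pow, mono_mul]; norm_num

lemma wd69 : mono 3 2 = u^3*v^2 := by rw [u, v, mono_pow, mono_pow, mono_mul]; norm_num

lemma wd70 : mono 3 3 = u^3*v^3 := by rw [u, v, mono_pow, mono_pow, mono_mul]; norm_num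

lemma wd71 : mono 4 (-4) = u^4*v'^4 := by rw [u, v', mono_pow, mono_pow, mono_mul]; norm_num

lemma wd72 : mono 4 (-3) = u^4*v'^3 := by rw [u, v', mono_pow, mono_pow, mono_mul]; norm_num

lemma wd73 : mono 4 (-2) = u^4*v'^2 := by rw [u, v', mono_pow, mono_pow, mono_mul]; norm_num

lemma wd74 : mono 4 (-1) = u^4*v' := by rw [u, v', mono_pow, mono_mul]; norm_num

lemma wd75 : mono 4 0 = u^4 := by rw [u, mono_pow]; norm_num

lemma wd76 : mono 4 1 = u^4*v := by rw [u, v, mono_pow, mono_mul]; norm_num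

lemma wd77 : mono 4 2 = u^4*v^2 := by rw [u, v, mono_pow, mono_pow, mono_mul]; norm_num

lemma wd78 : mono 5 (-2) = u^5*v'^2 := by rw [u, v', mono_pow, mono_pow, mono_mul]; norm_num

lemma wd79 : mono 5 (-1) = u^5*v' := by rw [u, v', mono_pow, mono_mul]; norm_num

lemma wd80 : mono 5 0 = u^5 := by rw [u, mono_pow]; norm_num

noncomputable def G1v (n : ℕ) : R :=
    ((((-64) : ℤ) : R)) * mono (-3) (-2)
    + ((((-277) + (32) * (n:ℤ) : ℤ) : R)) * mono (-3) (-1)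
    + ((((277) + (277) * (n:ℤ) : ℤ) : R)) * mono (-3) 0
    + ((((-686) + (-32) * (n:ℤ) : ℤ) : R)) * mono (-3) 1
    + ((((-1910) + (-586) * (n:ℤ) : ℤ) : R)) * mono (-3) 2
    + ((((-70) : ℤ) : R)) * mono (-3) 3
    + ((((-128) + (-32) * (n:ℤ) : ℤ) : R)) * mono (-2) (-3)
    + ((((-405) + (-277) * (n:ℤ) : ℤ) : R)) * mono (-2) (-2)
    + ((((-541) + (-554) * (n:ℤ) : ℤ) : R)) * mono (-2) (-1)
    + ((((703) + (586) * (n:ℤ) : ℤ) : R)) * mono (-2) 0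
    + ((((216) : ℤ) : R)) * mono (-2) 1
    + ((((130) + (6) * (n:ℤ) : ℤ) : R)) * mono (-2) 2
    + ((((-36) + (6) * (n:ℤ) : ℤ) : R)) * mono (-2) 3
    + ((((1108) + (277) * (n:ℤ) : ℤ) : R)) * mono (-1) (-3)
    + ((((1715) + (-309) * (n:ℤ) : ℤ) : R)) * mono (-1) (-2)
    + ((((-826) : ℤ) : R)) * mono (-1) (-1)
    + ((((-126) + (-6) * (n:ℤ) : ℤ) : R)) * mono (-1) 0
    + ((((198) + (6) * (n:ℤ) : ℤ) : R)) * mono (-1) 1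
    + ((((342) + (-24) * (n:ℤ) : ℤ) : R)) * mono (-1) 2
    + ((((-138) + (6) * (n:ℤ) : ℤ) : R)) * mono (-1) 3
    + ((((-30) + (-6) * (n:ℤ) : ℤ) : R)) * mono (-1) 4
    + ((((735) : ℤ) : R)) * mono 0 (-3)
    + ((((201) : ℤ) : R)) * mono 0 (-2)
    + ((((-282) + (-12) * (n:ℤ) : ℤ) : R)) * mono 0 (-1)
    + ((((-159) + (30) * (n:ℤ) : ℤ) : R)) * mono 0 0
    + ((((36) + (-24) * (n:ℤ) : ℤ) : R)) * mono 0 1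
    + ((((120) + (-24) * (n:ℤ) : ℤ) : R)) * mono 0 2
    + ((((-24) + (30) * (n:ℤ) : ℤ) : R)) * mono 0 3
    + ((((-60) + (-12) * (n:ℤ) : ℤ) : R)) * mono 0 4
    + ((((171) : ℤ) : R)) * mono 1 (-3)
    + ((((-270) + (-6) * (n:ℤ) : ℤ) : R)) * mono 1 (-2)
    + ((((45) + (18) * (n:ℤ) : ℤ) : R)) * mono 1 (-1)
    + ((((24) + (42) * (n:ℤ) : ℤ) : R)) * mono 1 0
    + ((((66) + (-60) * (n:ℤ) : ℤ) : R)) * mono 1 1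
    + ((((90) + (42) * (n:ℤ) : ℤ) : R)) * mono 1 2
    + ((((-18) + (18) * (n:ℤ) : ℤ) : R)) * mono 1 3
    + ((((-30) + (-6) * (n:ℤ) : ℤ) : R)) * mono 1 4
    + ((((45) : ℤ) : R)) * mono 2 (-3)
    + ((((-72) + (-12) * (n:ℤ) : ℤ) : R)) * mono 2 (-2)
    + ((((-54) + (30) * (n:ℤ) : ℤ) : R)) * mono 2 (-1)
    + ((((-6) + (-24) * (n:ℤ) : ℤ) : R)) * mono 2 0
    + ((((-24) + (-24) * (n:ℤ) : ℤ) : R)) * mono 2 1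
    + ((((42) + (30) * (n:ℤ) : ℤ) : R)) * mono 2 2
    + ((((-72) + (-12) * (n:ℤ) : ℤ) : R)) * mono 2 3
    + ((((36) : ℤ) : R)) * mono 3 (-3)
    + ((((18) + (-6) * (n:ℤ) : ℤ) : R)) * mono 3 (-2)
    + ((((30) + (6) * (n:ℤ) : ℤ) : R)) * mono 3 (-1)
    + ((((-24) + (-24) * (n:ℤ) : ℤ) : R)) * mono 3 0
    + ((((12) + (6) * (n:ℤ) : ℤ) : R)) * mono 3 1
    + ((((-42) + (-6) * (n:ℤ) : ℤ) : R)) * mono 3 2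
    + ((((36) + (6) * (n:ℤ) : ℤ) : R)) * mono 4 (-1)
    + ((((36) + (6) * (n:ℤ) : ℤ) : R)) * mono 4 0

noncomputable def G2v (n : ℕ) : R :=
    ((((128) + (32) * (n:ℤ) : ℤ) : R)) * mono (-3) (-2)
    + ((((1236) + (309) * (n:ℤ) : ℤ) : R)) * mono (-3) (-1)
    + ((((944) + (245) * (n:ℤ) : ℤ) : R)) * mono (-3) 0
    + ((((-2742) + (-618) * (n:ℤ) : ℤ) : R)) * mono (-3) 1
    + ((((-2554) + (-586) * (n:ℤ) : ℤ) : R)) * mono (-3) 2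
    + ((((-70) : ℤ) : R)) * mono (-3) 3
    + ((((64) : ℤ) : R)) * mono (-2) (-3)
    + ((((-181) + (-309) * (n:ℤ) : ℤ) : R)) * mono (-2) (-2)
    + ((((183) + (-277) * (n:ℤ) : ℤ) : R)) * mono (-2) (-1)
    + ((((99) + (32) * (n:ℤ) : ℤ) : R)) * mono (-2) 0
    + ((((1108) + (586) * (n:ℤ) : ℤ) : R)) * mono (-2) 1
    + ((((118) : ℤ) : R)) * mono (-2) 2
    + ((((-14) : ℤ) : R)) * mono (-2) 3
    + ((((-309) + (-32) * (n:ℤ) : ℤ) : R)) * mono (-1) (-3)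
    + ((((-1075) : ℤ) : R)) * mono (-1) (-2)
    + ((((592) : ℤ) : R)) * mono (-1) (-1)
    + ((((-505) : ℤ) : R)) * mono (-1) 0
    + ((((138) : ℤ) : R)) * mono (-1) 1
    + ((((138) : ℤ) : R)) * mono (-1) 2
    + ((((-60) : ℤ) : R)) * mono (-1) 3
    + ((((24) : ℤ) : R)) * mono (-1) 4
    + ((((309) + (309) * (n:ℤ) : ℤ) : R)) * mono 0 (-3)
    + ((((18) : ℤ) : R)) * mono 0 (-2)
    + ((((-84) : ℤ) : R)) * mono 0 (-1)
    + ((((-294) : ℤ) : R)) * mono 0 0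
    + ((((54) : ℤ) : R)) * mono 0 1
    + ((((18) : ℤ) : R)) * mono 0 2
    + ((((30) : ℤ) : R)) * mono 0 4
    + ((((-105) : ℤ) : R)) * mono 1 (-3)
    + ((((-60) : ℤ) : R)) * mono 1 (-2)
    + ((((-27) : ℤ) : R)) * mono 1 (-1)
    + ((((-162) : ℤ) : R)) * mono 1 1
    + ((((-24) : ℤ) : R)) * mono 1 2
    + ((((12) : ℤ) : R)) * mono 1 3
    + ((((6) : ℤ) : R)) * mono 1 4
    + ((((72) : ℤ) : R)) * mono 2 (-3)
    + ((((-45) : ℤ) : R)) * mono 2 (-2)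
    + ((((-114) : ℤ) : R)) * mono 2 (-1)
    + ((((-12) : ℤ) : R)) * mono 2 2
    + ((((36) : ℤ) : R)) * mono 3 (-3)
    + ((((96) : ℤ) : R)) * mono 3 (-2)
    + ((((72) : ℤ) : R)) * mono 3 (-1)
    + ((((-18) : ℤ) : R)) * mono 3 1
    + ((((-6) : ℤ) : R)) * mono 3 2

noncomputable def URv (n : ℕ) : R :=
    ((((90) + (-705) * (n:ℤ) + (-309) * (n:ℤ) * (n:ℤ) : ℤ) : R)) * mono (-3) (-1)
    + ((((1632) + (1024) * (n:ℤ) + (-32) * (n:ℤ) * (n:ℤ) : ℤ) : R)) * mono (-3) 0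
    + ((((-155) + (-558) * (n:ℤ) + (-277) * (n:ℤ) * (n:ℤ) : ℤ) : R)) * mono (-3) 1
    + ((((-104) + (72) * (n:ℤ) + (32) * (n:ℤ) * (n:ℤ) : ℤ) : R)) * mono (-3) 2
    + ((((1542) + (2434) * (n:ℤ) + (586) * (n:ℤ) * (n:ℤ) : ℤ) : R)) * mono (-3) 3
    + ((((-162) : ℤ) : R)) * mono (-3) 4
    + ((((564) + (204) * (n:ℤ) : ℤ) : R)) * mono (-2) (-2)
    + ((((1188) : ℤ) : R)) * mono (-2) (-1)
    + ((((558) : ℤ) : R)) * mono (-2) 0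
    + ((((36) : ℤ) : R)) * mono (-2) 1
    + ((((-468) : ℤ) : R)) * mono (-2) 2
    + ((((-468) : ℤ) : R)) * mono (-2) 3
    + ((((-208) + (-82) * (n:ℤ) : ℤ) : R)) * mono (-2) 4
    + ((((-189) + (-63) * (n:ℤ) : ℤ) : R)) * mono (-1) (-3)
    + ((((36) : ℤ) : R)) * mono (-1) (-2)
    + ((((48) + (12) * (n:ℤ) : ℤ) : R)) * mono (-1) 4
    + ((((36) : ℤ) : R)) * mono 1 (-3)
    + ((((-18) : ℤ) : R)) * mono 2 (-3)
    + ((((36) : ℤ) : R)) * mono 3 (-3)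

noncomputable def URRv (n : ℕ) : R :=
    ((((-162) : ℤ) : R)) * mono (-4) 1
    + ((((-208) + (-82) * (n:ℤ) : ℤ) : R)) * mono (-4) 2
    + ((((48) + (12) * (n:ℤ) : ℤ) : R)) * mono (-4) 3
    + ((((1542) + (2434) * (n:ℤ) + (586) * (n:ℤ) * (n:ℤ) : ℤ) : R)) * mono (-3) 0
    + ((((-468) : ℤ) : R)) * mono (-3) 1
    + ((((-104) + (72) * (n:ℤ) + (32) * (n:ℤ) * (n:ℤ) : ℤ) : R)) * mono (-2) (-1)
    + ((((-468) : ℤ) : R)) * mono (-2) 0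
    + ((((-155) + (-558) * (n:ℤ) + (-277) * (n:ℤ) * (n:ℤ) : ℤ) : R)) * mono (-1) (-2)
    + ((((36) : ℤ) : R)) * mono (-1) (-1)
    + ((((1632) + (1024) * (n:ℤ) + (-32) * (n:ℤ) * (n:ℤ) : ℤ) : R)) * mono 0 (-3)
    + ((((558) : ℤ) : R)) * mono 0 (-2)
    + ((((90) + (-705) * (n:ℤ) + (-309) * (n:ℤ) * (n:ℤ) : ℤ) : R)) * mono 1 (-4)
    + ((((1188) : ℤ) : R)) * mono 1 (-3)
    + ((((564) + (204) * (n:ℤ) : ℤ) : R)) * mono 2 (-4)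
    + ((((36) : ℤ) : R)) * mono 2 (-3)
    + ((((-189) + (-63) * (n:ℤ) : ℤ) : R)) * mono 3 (-4)
    + ((((36) : ℤ) : R)) * mono 3 (-2)
    + ((((-18) : ℤ) : R)) * mono 3 (-1)
    + ((((36) : ℤ) : R)) * mono 3 0

noncomputable def G1Xv (n : ℕ) : R :=
    ((((192) : ℤ) : R)) * mono (-3) (-2)
    + ((((831) + (-96) * (n:ℤ) : ℤ) : R)) * mono (-3) (-1)
    + ((((-831) + (-831) * (n:ℤ) : ℤ) : R)) * mono (-3) 0
    + ((((2058) + (96) * (n:ℤ) : ℤ) : R)) * mono (-3) 1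
    + ((((5730) + (1758) * (n:ℤ) : ℤ) : R)) * mono (-3) 2
    + ((((210) : ℤ) : R)) * mono (-3) 3
    + ((((256) + (64) * (n:ℤ) : ℤ) : R)) * mono (-2) (-3)
    + ((((810) + (554) * (n:ℤ) : ℤ) : R)) * mono (-2) (-2)
    + ((((1082) + (1108) * (n:ℤ) : ℤ) : R)) * mono (-2) (-1)
    + ((((-1406) + (-1172) * (n:ℤ) : ℤ) : R)) * mono (-2) 0
    + ((((-432) : ℤ) : R)) * mono (-2) 1
    + ((((-260) + (-12) * (n:ℤ) : ℤ) : R)) * mono (-2) 2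
    + ((((72) + (-12) * (n:ℤ) : ℤ) : R)) * mono (-2) 3
    + ((((-1108) + (-277) * (n:ℤ) : ℤ) : R)) * mono (-1) (-3)
    + ((((-1715) + (309) * (n:ℤ) : ℤ) : R)) * mono (-1) (-2)
    + ((((826) : ℤ) : R)) * mono (-1) (-1)
    + ((((126) + (6) * (n:ℤ) : ℤ) : R)) * mono (-1) 0
    + ((((-198) + (-6) * (n:ℤ) : ℤ) : R)) * mono (-1) 1
    + ((((-342) + (24) * (n:ℤ) : ℤ) : R)) * mono (-1) 2
    + ((((138) + (-6) * (n:ℤ) : ℤ) : R)) * mono (-1) 3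
    + ((((30) + (6) * (n:ℤ) : ℤ) : R)) * mono (-1) 4
    + ((((171) : ℤ) : R)) * mono 1 (-3)
    + ((((-270) + (-6) * (n:ℤ) : ℤ) : R)) * mono 1 (-2)
    + ((((45) + (18) * (n:ℤ) : ℤ) : R)) * mono 1 (-1)
    + ((((24) + (42) * (n:ℤ) : ℤ) : R)) * mono 1 0
    + ((((66) + (-60) * (n:ℤ) : ℤ) : R)) * mono 1 1
    + ((((90) + (42) * (n:ℤ) : ℤ) : R)) * mono 1 2
    + ((((-18) + (18) * (n:ℤ) : ℤ) : R)) * mono 1 3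
    + ((((-30) + (-6) * (n:ℤ) : ℤ) : R)) * mono 1 4
    + ((((90) : ℤ) : R)) * mono 2 (-3)
    + ((((-144) + (-24) * (n:ℤ) : ℤ) : R)) * mono 2 (-2)
    + ((((-108) + (60) * (n:ℤ) : ℤ) : R)) * mono 2 (-1)
    + ((((-12) + (-48) * (n:ℤ) : ℤ) : R)) * mono 2 0
    + ((((-48) + (-48) * (n:ℤ) : ℤ) : R)) * mono 2 1
    + ((((84) + (60) * (n:ℤ) : ℤ) : R)) * mono 2 2
    + ((((-144) + (-24) * (n:ℤ) : ℤ) : R)) * mono 2 3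
    + ((((108) : ℤ) : R)) * mono 3 (-3)
    + ((((54) + (-18) * (n:ℤ) : ℤ) : R)) * mono 3 (-2)
    + ((((90) + (18) * (n:ℤ) : ℤ) : R)) * mono 3 (-1)
    + ((((-72) + (-72) * (n:ℤ) : ℤ) : R)) * mono 3 0
    + ((((36) + (18) * (n:ℤ) : ℤ) : R)) * mono 3 1
    + ((((-126) + (-18) * (n:ℤ) : ℤ) : R)) * mono 3 2
    + ((((144) + (24) * (n:ℤ) : ℤ) : R)) * mono 4 (-1)
    + ((((144) + (24) * (n:ℤ) : ℤ) : R)) * mono 4 0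

noncomputable def G2Yv (n : ℕ) : R :=
    ((((-256) + (-64) * (n:ℤ) : ℤ) : R)) * mono (-3) (-2)
    + ((((-1236) + (-309) * (n:ℤ) : ℤ) : R)) * mono (-3) (-1)
    + ((((-2742) + (-618) * (n:ℤ) : ℤ) : R)) * mono (-3) 1
    + ((((-5108) + (-1172) * (n:ℤ) : ℤ) : R)) * mono (-3) 2
    + ((((-210) : ℤ) : R)) * mono (-3) 3
    + ((((-192) : ℤ) : R)) * mono (-2) (-3)
    + ((((362) + (618) * (n:ℤ) : ℤ) : R)) * mono (-2) (-2)
    + ((((-183) + (277) * (n:ℤ) : ℤ) : R)) * mono (-2) (-1)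
    + ((((1108) + (586) * (n:ℤ) : ℤ) : R)) * mono (-2) 1
    + ((((236) : ℤ) : R)) * mono (-2) 2
    + ((((-42) : ℤ) : R)) * mono (-2) 3
    + ((((927) + (96) * (n:ℤ) : ℤ) : R)) * mono (-1) (-3)
    + ((((2150) : ℤ) : R)) * mono (-1) (-2)
    + ((((-592) : ℤ) : R)) * mono (-1) (-1)
    + ((((138) : ℤ) : R)) * mono (-1) 1
    + ((((276) : ℤ) : R)) * mono (-1) 2
    + ((((-180) : ℤ) : R)) * mono (-1) 3
    + ((((96) : ℤ) : R)) * mono (-1) 4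
    + ((((-927) + (-927) * (n:ℤ) : ℤ) : R)) * mono 0 (-3)
    + ((((-36) : ℤ) : R)) * mono 0 (-2)
    + ((((84) : ℤ) : R)) * mono 0 (-1)
    + ((((54) : ℤ) : R)) * mono 0 1
    + ((((36) : ℤ) : R)) * mono 0 2
    + ((((120) : ℤ) : R)) * mono 0 4
    + ((((315) : ℤ) : R)) * mono 1 (-3)
    + ((((120) : ℤ) : R)) * mono 1 (-2)
    + ((((27) : ℤ) : R)) * mono 1 (-1)
    + ((((-162) : ℤ) : R)) * mono 1 1
    + ((((-48) : ℤ) : R)) * mono 1 2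
    + ((((36) : ℤ) : R)) * mono 1 3
    + ((((24) : ℤ) : R)) * mono 1 4
    + ((((-216) : ℤ) : R)) * mono 2 (-3)
    + ((((90) : ℤ) : R)) * mono 2 (-2)
    + ((((114) : ℤ) : R)) * mono 2 (-1)
    + ((((-24) : ℤ) : R)) * mono 2 2
    + ((((-108) : ℤ) : R)) * mono 3 (-3)
    + ((((-192) : ℤ) : R)) * mono 3 (-2)
    + ((((-72) : ℤ) : R)) * mono 3 (-1)
    + ((((-18) : ℤ) : R)) * mono 3 1
    + ((((-12) : ℤ) : R)) * mono 3 2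

noncomputable def KXv : R :=
    ((((-1) : ℤ) : R)) * mono (-1) 0
    + ((((-1) : ℤ) : R)) * mono (-1) 1
    + ((((1) : ℤ) : R)) * mono 1 (-1)
    + ((((1) : ℤ) : R)) * mono 1 0

noncomputable def KYv : R :=
    ((((1) : ℤ) : R)) * mono (-1) 1
    + ((((-1) : ℤ) : R)) * mono 0 (-1)
    + ((((1) : ℤ) : R)) * mono 0 1
    + ((((-1) : ℤ) : R)) * mono 1 (-1)

noncomputable def WK2v : R :=
    ((((-1) : ℤ) : R)) * mono (-3) 2
    + ((((-2) : ℤ) : R)) * mono (-3) 3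
    + ((((-1) : ℤ) : R)) * mono (-3) 4
    + ((((1) : ℤ) : R)) * mono (-2) 0
    + ((((-7) : ℤ) : R)) * mono (-2) 2
    + ((((-7) : ℤ) : R)) * mono (-2) 3
    + ((((1) : ℤ) : R)) * mono (-2) 5
    + ((((2) : ℤ) : R)) * mono (-1) (-1)
    + ((((7) : ℤ) : R)) * mono (-1) 0
    + ((((-11) : ℤ) : R)) * mono (-1) 2
    + ((((7) : ℤ) : R)) * mono (-1) 4
    + ((((2) : ℤ) : R)) * mono (-1) 5
    + ((((1) : ℤ) : R)) * mono 0 (-2)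
    + ((((7) : ℤ) : R)) * mono 0 (-1)
    + ((((11) : ℤ) : R)) * mono 0 0
    + ((((11) : ℤ) : R)) * mono 0 3
    + ((((7) : ℤ) : R)) * mono 0 4
    + ((((1) : ℤ) : R)) * mono 0 5
    + ((((-1) : ℤ) : R)) * mono 2 (-3)
    + ((((-7) : ℤ) : R)) * mono 2 (-2)
    + ((((-11) : ℤ) : R)) * mono 2 (-1)
    + ((((-11) : ℤ) : R)) * mono 2 2
    + ((((-7) : ℤ) : R)) * mono 2 3
    + ((((-1) : ℤ) : R)) * mono 2 4
    + ((((-2) : ℤ) : R)) * mono 3 (-3)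
    + ((((-7) : ℤ) : R)) * mono 3 (-2)
    + ((((11) : ℤ) : R)) * mono 3 0
    + ((((-7) : ℤ) : R)) * mono 3 2
    + ((((-2) : ℤ) : R)) * mono 3 3
    + ((((-1) : ℤ) : R)) * mono 4 (-3)
    + ((((7) : ℤ) : R)) * mono 4 (-1)
    + ((((7) : ℤ) : R)) * mono 4 0
    + ((((-1) : ℤ) : R)) * mono 4 2
    + ((((1) : ℤ) : R)) * mono 5 (-2)
    + ((((2) : ℤ) : R)) * mono 5 (-1)
    + ((((1) : ℤ) : R)) * mono 5 0

noncomputable def WK1v : R :=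
    ((((-1) : ℤ) : R)) * mono (-2) 2
    + ((((-1) : ℤ) : R)) * mono (-2) 3
    + ((((1) : ℤ) : R)) * mono (-1) 0
    + ((((-3) : ℤ) : R)) * mono (-1) 2
    + ((((1) : ℤ) : R)) * mono (-1) 4
    + ((((1) : ℤ) : R)) * mono 0 (-1)
    + ((((3) : ℤ) : R)) * mono 0 0
    + ((((3) : ℤ) : R)) * mono 0 3
    + ((((1) : ℤ) : R)) * mono 0 4
    + ((((-1) : ℤ) : R)) * mono 2 (-2)
    + ((((-3) : ℤ) : R)) * mono 2 (-1)
    + ((((-3) : ℤ) : R)) * mono 2 2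
    + ((((-1) : ℤ) : R)) * mono 2 3
    + ((((-1) : ℤ) : R)) * mono 3 (-2)
    + ((((3) : ℤ) : R)) * mono 3 0
    + ((((-1) : ℤ) : R)) * mono 3 2
    + ((((1) : ℤ) : R)) * mono 4 (-1)
    + ((((1) : ℤ) : R)) * mono 4 0

noncomputable def G1Kv (n : ℕ) : R :=
    ((((192) : ℤ) : R)) * mono (-4) (-2)
    + ((((1023) + (-96) * (n:ℤ) : ℤ) : R)) * mono (-4) (-1)
    + ((((0) + (-927) * (n:ℤ) : ℤ) : R)) * mono (-4) 0
    + ((((1227) + (-735) * (n:ℤ) : ℤ) : R)) * mono (-4) 1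
    + ((((7788) + (1854) * (n:ℤ) : ℤ) : R)) * mono (-4) 2
    + ((((5940) + (1758) * (n:ℤ) : ℤ) : R)) * mono (-4) 3
    + ((((210) : ℤ) : R)) * mono (-4) 4
    + ((((448) + (64) * (n:ℤ) : ℤ) : R)) * mono (-3) (-3)
    + ((((2473) + (522) * (n:ℤ) : ℤ) : R)) * mono (-3) (-2)
    + ((((3746) + (543) * (n:ℤ) : ℤ) : R)) * mono (-3) (-1)
    + ((((72) + (-2557) * (n:ℤ) : ℤ) : R)) * mono (-3) 0
    + ((((9235) + (43) * (n:ℤ) : ℤ) : R)) * mono (-3) 1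
    + ((((18766) + (5358) * (n:ℤ) : ℤ) : R)) * mono (-3) 2
    + ((((6172) + (1734) * (n:ℤ) : ℤ) : R)) * mono (-3) 3
    + ((((282) + (-12) * (n:ℤ) : ℤ) : R)) * mono (-3) 4
    + ((((256) + (64) * (n:ℤ) : ℤ) : R)) * mono (-2) (-4)
    + ((((662) + (469) * (n:ℤ) : ℤ) : R)) * mono (-2) (-3)
    + ((((1968) + (2770) * (n:ℤ) : ℤ) : R)) * mono (-2) (-2)
    + ((((1761) + (2088) * (n:ℤ) : ℤ) : R)) * mono (-2) (-1)
    + ((((-1389) + (-3137) * (n:ℤ) : ℤ) : R)) * mono (-2) 0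
    + ((((4754) + (670) * (n:ℤ) : ℤ) : R)) * mono (-2) 1
    + ((((4260) + (1728) * (n:ℤ) : ℤ) : R)) * mono (-2) 2
    + ((((-38) + (-30) * (n:ℤ) : ℤ) : R)) * mono (-2) 3
    + ((((240) + (-12) * (n:ℤ) : ℤ) : R)) * mono (-2) 4
    + ((((30) + (6) * (n:ℤ) : ℤ) : R)) * mono (-2) 5
    + ((((-852) + (-213) * (n:ℤ) : ℤ) : R)) * mono (-1) (-4)
    + ((((-3973) + (96) * (n:ℤ) : ℤ) : R)) * mono (-1) (-3)
    + ((((-3535) + (2312) * (n:ℤ) : ℤ) : R)) * mono (-1) (-2)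
    + ((((565) + (251) * (n:ℤ) : ℤ) : R)) * mono (-1) (-1)
    + ((((-832) + (-1160) * (n:ℤ) : ℤ) : R)) * mono (-1) 0
    + ((((-1502) : ℤ) : R)) * mono (-1) 1
    + ((((-1274) + (36) * (n:ℤ) : ℤ) : R)) * mono (-1) 2
    + ((((174) : ℤ) : R)) * mono (-1) 3
    + ((((228) + (12) * (n:ℤ) : ℤ) : R)) * mono (-1) 4
    + ((((30) + (6) * (n:ℤ) : ℤ) : R)) * mono (-1) 5
    + ((((-1108) + (-277) * (n:ℤ) : ℤ) : R)) * mono 0 (-4)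
    + ((((-2652) + (32) * (n:ℤ) : ℤ) : R)) * mono 0 (-3)
    + ((((-988) + (303) * (n:ℤ) : ℤ) : R)) * mono 0 (-2)
    + ((((727) + (18) * (n:ℤ) : ℤ) : R)) * mono 0 (-1)
    + ((((-3) + (60) * (n:ℤ) : ℤ) : R)) * mono 0 0
    + ((((-450) : ℤ) : R)) * mono 0 1
    + ((((-48) : ℤ) : R)) * mono 0 2
    + ((((240) + (60) * (n:ℤ) : ℤ) : R)) * mono 0 3
    + ((((-18) + (18) * (n:ℤ) : ℤ) : R)) * mono 0 4
    + ((((-30) + (-6) * (n:ℤ) : ℤ) : R)) * mono 0 5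
    + ((((171) : ℤ) : R)) * mono 1 (-4)
    + ((((333) + (-6) * (n:ℤ) : ℤ) : R)) * mono 1 (-3)
    + ((((-648) + (-24) * (n:ℤ) : ℤ) : R)) * mono 1 (-2)
    + ((((-363) + (126) * (n:ℤ) : ℤ) : R)) * mono 1 (-1)
    + ((((63) + (96) * (n:ℤ) : ℤ) : R)) * mono 1 0
    + ((((252) + (-192) * (n:ℤ) : ℤ) : R)) * mono 1 1
    + ((((354) + (96) * (n:ℤ) : ℤ) : R)) * mono 1 2
    + ((((-54) + (126) * (n:ℤ) : ℤ) : R)) * mono 1 3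
    + ((((-252) + (-24) * (n:ℤ) : ℤ) : R)) * mono 1 4
    + ((((-30) + (-6) * (n:ℤ) : ℤ) : R)) * mono 1 5
    + ((((261) : ℤ) : R)) * mono 2 (-4)
    + ((((135) + (-30) * (n:ℤ) : ℤ) : R)) * mono 2 (-3)
    + ((((-513) + (-18) * (n:ℤ) : ℤ) : R)) * mono 2 (-2)
    + ((((-267) + (168) * (n:ℤ) : ℤ) : R)) * mono 2 (-1)
    + ((((-84) + (-204) * (n:ℤ) : ℤ) : R)) * mono 2 0
    + ((((48) + (-204) * (n:ℤ) : ℤ) : R)) * mono 2 1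
    + ((((42) + (168) * (n:ℤ) : ℤ) : R)) * mono 2 2
    + ((((-522) + (-18) * (n:ℤ) : ℤ) : R)) * mono 2 3
    + ((((-174) + (-30) * (n:ℤ) : ℤ) : R)) * mono 2 4
    + ((((198) : ℤ) : R)) * mono 3 (-4)
    + ((((324) + (-42) * (n:ℤ) : ℤ) : R)) * mono 3 (-3)
    + ((((108) : ℤ) : R)) * mono 3 (-2)
    + ((((276) : ℤ) : R)) * mono 3 (-1)
    + ((((138) + (-228) * (n:ℤ) : ℤ) : R)) * mono 3 0
    + ((((90) : ℤ) : R)) * mono 3 1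
    + ((((-402) : ℤ) : R)) * mono 3 2
    + ((((-270) + (-42) * (n:ℤ) : ℤ) : R)) * mono 3 3
    + ((((108) : ℤ) : R)) * mono 4 (-4)
    + ((((162) + (-18) * (n:ℤ) : ℤ) : R)) * mono 4 (-3)
    + ((((288) + (24) * (n:ℤ) : ℤ) : R)) * mono 4 (-2)
    + ((((594) + (42) * (n:ℤ) : ℤ) : R)) * mono 4 (-1)
    + ((((540) + (42) * (n:ℤ) : ℤ) : R)) * mono 4 0
    + ((((54) + (24) * (n:ℤ) : ℤ) : R)) * mono 4 1
    + ((((-126) + (-18) * (n:ℤ) : ℤ) : R)) * mono 4 2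
    + ((((144) + (24) * (n:ℤ) : ℤ) : R)) * mono 5 (-2)
    + ((((288) + (48) * (n:ℤ) : ℤ) : R)) * mono 5 (-1)
    + ((((144) + (24) * (n:ℤ) : ℤ) : R)) * mono 5 0

noncomputable def G1XPv (n : ℕ) : R :=
    ((((64) : ℤ) : R)) * mono (-4) (-2)
    + ((((341) + (-32) * (n:ℤ) : ℤ) : R)) * mono (-4) (-1)
    + ((((0) + (-309) * (n:ℤ) : ℤ) : R)) * mono (-4) 0
    + ((((409) + (-245) * (n:ℤ) : ℤ) : R)) * mono (-4) 1
    + ((((2596) + (618) * (n:ℤ) : ℤ) : R)) * mono (-4) 2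
    + ((((1980) + (586) * (n:ℤ) : ℤ) : R)) * mono (-4) 3
    + ((((70) : ℤ) : R)) * mono (-4) 4
    + ((((128) + (32) * (n:ℤ) : ℤ) : R)) * mono (-3) (-3)
    + ((((533) + (309) * (n:ℤ) : ℤ) : R)) * mono (-3) (-2)
    + ((((946) + (831) * (n:ℤ) : ℤ) : R)) * mono (-3) (-1)
    + ((((-162) + (-32) * (n:ℤ) : ℤ) : R)) * mono (-3) 0
    + ((((-919) + (-586) * (n:ℤ) : ℤ) : R)) * mono (-3) 1
    + ((((-346) + (-6) * (n:ℤ) : ℤ) : R)) * mono (-3) 2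
    + ((((-94) + (-12) * (n:ℤ) : ℤ) : R)) * mono (-3) 3
    + ((((36) + (-6) * (n:ℤ) : ℤ) : R)) * mono (-3) 4
    + ((((-1172) + (-277) * (n:ℤ) : ℤ) : R)) * mono (-2) (-3)
    + ((((-3164) + (64) * (n:ℤ) : ℤ) : R)) * mono (-2) (-2)
    + ((((-889) + (618) * (n:ℤ) : ℤ) : R)) * mono (-2) (-1)
    + ((((543) + (251) * (n:ℤ) : ℤ) : R)) * mono (-2) 0
    + ((((-2668) + (-618) * (n:ℤ) : ℤ) : R)) * mono (-2) 1
    + ((((-2520) + (-568) * (n:ℤ) : ℤ) : R)) * mono (-2) 2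
    + ((((-274) + (18) * (n:ℤ) : ℤ) : R)) * mono (-2) 3
    + ((((168) : ℤ) : R)) * mono (-2) 4
    + ((((30) + (6) * (n:ℤ) : ℤ) : R)) * mono (-2) 5
    + ((((-128) + (-32) * (n:ℤ) : ℤ) : R)) * mono (-1) (-4)
    + ((((-1268) + (-309) * (n:ℤ) : ℤ) : R)) * mono (-1) (-3)
    + ((((-1882) + (-831) * (n:ℤ) : ℤ) : R)) * mono (-1) (-2)
    + ((((243) + (44) * (n:ℤ) : ℤ) : R)) * mono (-1) (-1)
    + ((((1360) + (568) * (n:ℤ) : ℤ) : R)) * mono (-1) 0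
    + ((((469) : ℤ) : R)) * mono (-1) 1
    + ((((-62) + (60) * (n:ℤ) : ℤ) : R)) * mono (-1) 2
    + ((((-132) : ℤ) : R)) * mono (-1) 3
    + ((((84) + (-18) * (n:ℤ) : ℤ) : R)) * mono (-1) 4
    + ((((60) + (12) * (n:ℤ) : ℤ) : R)) * mono (-1) 5
    + ((((1108) + (277) * (n:ℤ) : ℤ) : R)) * mono 0 (-4)
    + ((((2652) + (-32) * (n:ℤ) : ℤ) : R)) * mono 0 (-3)
    + ((((988) + (-303) * (n:ℤ) : ℤ) : R)) * mono 0 (-2)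
    + ((((-727) + (-18) * (n:ℤ) : ℤ) : R)) * mono 0 (-1)
    + ((((3) + (-60) * (n:ℤ) : ℤ) : R)) * mono 0 0
    + ((((450) : ℤ) : R)) * mono 0 1
    + ((((48) : ℤ) : R)) * mono 0 2
    + ((((-240) + (-60) * (n:ℤ) : ℤ) : R)) * mono 0 3
    + ((((18) + (-18) * (n:ℤ) : ℤ) : R)) * mono 0 4
    + ((((30) + (6) * (n:ℤ) : ℤ) : R)) * mono 0 5
    + ((((735) : ℤ) : R)) * mono 1 (-4)
    + ((((891) : ℤ) : R)) * mono 1 (-3)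
    + ((((-54) : ℤ) : R)) * mono 1 (-2)
    + ((((-315) : ℤ) : R)) * mono 1 (-1)
    + ((((-63) : ℤ) : R)) * mono 1 0
    + ((((186) : ℤ) : R)) * mono 1 1
    + ((((78) : ℤ) : R)) * mono 1 2
    + ((((-54) : ℤ) : R)) * mono 1 3
    + ((((12) : ℤ) : R)) * mono 1 4
    + ((((171) : ℤ) : R)) * mono 2 (-4)
    + ((((-135) + (-6) * (n:ℤ) : ℤ) : R)) * mono 2 (-3)
    + ((((-279) + (18) * (n:ℤ) : ℤ) : R)) * mono 2 (-2)
    + ((((21) + (60) * (n:ℤ) : ℤ) : R)) * mono 2 (-1)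
    + ((((84) : ℤ) : R)) * mono 2 0
    + ((((168) : ℤ) : R)) * mono 2 1
    + ((((102) + (60) * (n:ℤ) : ℤ) : R)) * mono 2 2
    + ((((-6) + (18) * (n:ℤ) : ℤ) : R)) * mono 2 3
    + ((((-30) + (-6) * (n:ℤ) : ℤ) : R)) * mono 2 4
    + ((((45) : ℤ) : R)) * mono 3 (-4)
    + ((((-27) + (-12) * (n:ℤ) : ℤ) : R)) * mono 3 (-3)
    + ((((-126) + (18) * (n:ℤ) : ℤ) : R)) * mono 3 (-2)
    + ((((-96) : ℤ) : R)) * mono 3 (-1)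
    + ((((-102) + (-60) * (n:ℤ) : ℤ) : R)) * mono 3 0
    + ((((-18) : ℤ) : R)) * mono 3 1
    + ((((-30) + (18) * (n:ℤ) : ℤ) : R)) * mono 3 2
    + ((((-72) + (-12) * (n:ℤ) : ℤ) : R)) * mono 3 3
    + ((((36) : ℤ) : R)) * mono 4 (-4)
    + ((((54) + (-6) * (n:ℤ) : ℤ) : R)) * mono 4 (-3)
    + ((((48) : ℤ) : R)) * mono 4 (-2)
    + ((((6) + (-18) * (n:ℤ) : ℤ) : R)) * mono 4 (-1)
    + ((((-12) + (-18) * (n:ℤ) : ℤ) : R)) * mono 4 0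
    + ((((-30) : ℤ) : R)) * mono 4 1
    + ((((-42) + (-6) * (n:ℤ) : ℤ) : R)) * mono 4 2
    + ((((36) + (6) * (n:ℤ) : ℤ) : R)) * mono 5 (-2)
    + ((((72) + (12) * (n:ℤ) : ℤ) : R)) * mono 5 (-1)
    + ((((36) + (6) * (n:ℤ) : ℤ) : R)) * mono 5 0

noncomputable def G2Kv (n : ℕ) : R :=
    ((((-256) + (-64) * (n:ℤ) : ℤ) : R)) * mono (-4) (-2)
    + ((((-1492) + (-373) * (n:ℤ) : ℤ) : R)) * mono (-4) (-1)
    + ((((-1236) + (-309) * (n:ℤ) : ℤ) : R)) * mono (-4) 0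
    + ((((-2742) + (-618) * (n:ℤ) : ℤ) : R)) * mono (-4) 1
    + ((((-7850) + (-1790) * (n:ℤ) : ℤ) : R)) * mono (-4) 2
    + ((((-5318) + (-1172) * (n:ℤ) : ℤ) : R)) * mono (-4) 3
    + ((((-210) : ℤ) : R)) * mono (-4) 4
    + ((((-448) + (-64) * (n:ℤ) : ℤ) : R)) * mono (-3) (-3)
    + ((((-1834) + (117) * (n:ℤ) : ℤ) : R)) * mono (-3) (-2)
    + ((((-3785) + (-96) * (n:ℤ) : ℤ) : R)) * mono (-3) (-1)
    + ((((-4161) + (-650) * (n:ℤ) : ℤ) : R)) * mono (-3) 0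
    + ((((-12226) + (-2440) * (n:ℤ) : ℤ) : R)) * mono (-3) 1
    + ((((-16932) + (-3548) * (n:ℤ) : ℤ) : R)) * mono (-3) 2
    + ((((-5544) + (-1172) * (n:ℤ) : ℤ) : R)) * mono (-3) 3
    + ((((-252) : ℤ) : R)) * mono (-3) 4
    + ((((-192) : ℤ) : R)) * mono (-2) (-4)
    + ((((457) + (650) * (n:ℤ) : ℤ) : R)) * mono (-2) (-3)
    + ((((2296) + (1854) * (n:ℤ) : ℤ) : R)) * mono (-2) (-2)
    + ((((135) + (1140) * (n:ℤ) : ℤ) : R)) * mono (-2) (-1)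
    + ((((-2409) + (245) * (n:ℤ) : ℤ) : R)) * mono (-2) 0
    + ((((-4152) + (-32) * (n:ℤ) : ℤ) : R)) * mono (-2) 1
    + ((((-3130) + (-586) * (n:ℤ) : ℤ) : R)) * mono (-2) 2
    + ((((-4) : ℤ) : R)) * mono (-2) 3
    + ((((-126) : ℤ) : R)) * mono (-2) 4
    + ((((96) : ℤ) : R)) * mono (-2) 5
    + ((((735) + (96) * (n:ℤ) : ℤ) : R)) * mono (-1) (-4)
    + ((((4174) + (-21) * (n:ℤ) : ℤ) : R)) * mono (-1) (-3)
    + ((((6001) + (64) * (n:ℤ) : ℤ) : R)) * mono (-1) (-2)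
    + ((((239) + (277) * (n:ℤ) : ℤ) : R)) * mono (-1) (-1)
    + ((((738) + (586) * (n:ℤ) : ℤ) : R)) * mono (-1) 0
    + ((((2088) + (586) * (n:ℤ) : ℤ) : R)) * mono (-1) 1
    + ((((1070) : ℤ) : R)) * mono (-1) 2
    + ((((-174) : ℤ) : R)) * mono (-1) 3
    + ((((228) : ℤ) : R)) * mono (-1) 4
    + ((((216) : ℤ) : R)) * mono (-1) 5
    + ((((0) + (-831) * (n:ℤ) : ℤ) : R)) * mono 0 (-4)
    + ((((575) + (-2685) * (n:ℤ) : ℤ) : R)) * mono 0 (-3)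
    + ((((1042) + (-927) * (n:ℤ) : ℤ) : R)) * mono 0 (-2)
    + ((((-229) : ℤ) : R)) * mono 0 (-1)
    + ((((303) : ℤ) : R)) * mono 0 0
    + ((((450) : ℤ) : R)) * mono 0 1
    + ((((48) : ℤ) : R)) * mono 0 2
    + ((((60) : ℤ) : R)) * mono 0 3
    + ((((516) : ℤ) : R)) * mono 0 4
    + ((((144) : ℤ) : R)) * mono 0 5
    + ((((-612) + (-927) * (n:ℤ) : ℤ) : R)) * mono 1 (-4)
    + ((((-114) + (-927) * (n:ℤ) : ℤ) : R)) * mono 1 (-3)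
    + ((((624) : ℤ) : R)) * mono 1 (-2)
    + ((((489) : ℤ) : R)) * mono 1 (-1)
    + ((((33) : ℤ) : R)) * mono 1 0
    + ((((-444) : ℤ) : R)) * mono 1 1
    + ((((-258) : ℤ) : R)) * mono 1 2
    + ((((180) : ℤ) : R)) * mono 1 3
    + ((((228) : ℤ) : R)) * mono 1 4
    + ((((24) : ℤ) : R)) * mono 1 5
    + ((((99) : ℤ) : R)) * mono 2 (-4)
    + ((((-231) : ℤ) : R)) * mono 2 (-3)
    + ((((15) : ℤ) : R)) * mono 2 (-2)
    + ((((195) : ℤ) : R)) * mono 2 (-1)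
    + ((((-120) : ℤ) : R)) * mono 2 0
    + ((((-252) : ℤ) : R)) * mono 2 1
    + ((((-114) : ℤ) : R)) * mono 2 2
    + ((((24) : ℤ) : R)) * mono 2 3
    + ((((24) : ℤ) : R)) * mono 2 4
    + ((((-324) : ℤ) : R)) * mono 3 (-4)
    + ((((-642) : ℤ) : R)) * mono 3 (-3)
    + ((((-552) : ℤ) : R)) * mono 3 (-2)
    + ((((-294) : ℤ) : R)) * mono 3 (-1)
    + ((((-90) : ℤ) : R)) * mono 3 0
    + ((((-90) : ℤ) : R)) * mono 3 1
    + ((((-78) : ℤ) : R)) * mono 3 2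
    + ((((-12) : ℤ) : R)) * mono 3 3
    + ((((-108) : ℤ) : R)) * mono 4 (-4)
    + ((((-300) : ℤ) : R)) * mono 4 (-3)
    + ((((-264) : ℤ) : R)) * mono 4 (-2)
    + ((((-72) : ℤ) : R)) * mono 4 (-1)
    + ((((-18) : ℤ) : R)) * mono 4 0
    + ((((-30) : ℤ) : R)) * mono 4 1
    + ((((-12) : ℤ) : R)) * mono 4 2

noncomputable def G2YPv (n : ℕ) : R :=
    ((((128) + (32) * (n:ℤ) : ℤ) : R)) * mono (-4) (-1)
    + ((((1236) + (309) * (n:ℤ) : ℤ) : R)) * mono (-4) 0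
    + ((((944) + (245) * (n:ℤ) : ℤ) : R)) * mono (-4) 1
    + ((((-2742) + (-618) * (n:ℤ) : ℤ) : R)) * mono (-4) 2
    + ((((-2554) + (-586) * (n:ℤ) : ℤ) : R)) * mono (-4) 3
    + ((((-70) : ℤ) : R)) * mono (-4) 4
    + ((((-128) + (-32) * (n:ℤ) : ℤ) : R)) * mono (-3) (-3)
    + ((((-1172) + (-309) * (n:ℤ) : ℤ) : R)) * mono (-3) (-2)
    + ((((-997) + (-522) * (n:ℤ) : ℤ) : R)) * mono (-3) (-1)
    + ((((4161) + (650) * (n:ℤ) : ℤ) : R)) * mono (-3) 0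
    + ((((3597) + (863) * (n:ℤ) : ℤ) : R)) * mono (-3) 1
    + ((((-1564) + (-32) * (n:ℤ) : ℤ) : R)) * mono (-3) 2
    + ((((-2436) + (-586) * (n:ℤ) : ℤ) : R)) * mono (-3) 3
    + ((((-84) : ℤ) : R)) * mono (-3) 4
    + ((((-64) : ℤ) : R)) * mono (-2) (-4)
    + ((((53) + (277) * (n:ℤ) : ℤ) : R)) * mono (-2) (-3)
    + ((((-1664) + (-64) * (n:ℤ) : ℤ) : R)) * mono (-2) (-2)
    + ((((-2299) + (-586) * (n:ℤ) : ℤ) : R)) * mono (-2) (-1)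
    + ((((2409) + (-245) * (n:ℤ) : ℤ) : R)) * mono (-2) 0
    + ((((2030) + (618) * (n:ℤ) : ℤ) : R)) * mono (-2) 1
    + ((((1330) + (586) * (n:ℤ) : ℤ) : R)) * mono (-2) 2
    + ((((256) : ℤ) : R)) * mono (-2) 3
    + ((((-74) : ℤ) : R)) * mono (-2) 4
    + ((((24) : ℤ) : R)) * mono (-2) 5
    + ((((245) + (32) * (n:ℤ) : ℤ) : R)) * mono (-1) (-4)
    + ((((1256) + (309) * (n:ℤ) : ℤ) : R)) * mono (-1) (-3)
    + ((((-775) + (554) * (n:ℤ) : ℤ) : R)) * mono (-1) (-2)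
    + ((((-651) + (-32) * (n:ℤ) : ℤ) : R)) * mono (-1) (-1)
    + ((((-738) + (-586) * (n:ℤ) : ℤ) : R)) * mono (-1) 0
    + ((((-1055) : ℤ) : R)) * mono (-1) 1
    + ((((266) : ℤ) : R)) * mono (-1) 2
    + ((((132) : ℤ) : R)) * mono (-1) 3
    + ((((-60) : ℤ) : R)) * mono (-1) 4
    + ((((54) : ℤ) : R)) * mono (-1) 5
    + ((((0) + (-277) * (n:ℤ) : ℤ) : R)) * mono 0 (-4)
    + ((((1057) : ℤ) : R)) * mono 0 (-3)
    + ((((-304) + (309) * (n:ℤ) : ℤ) : R)) * mono 0 (-2)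
    + ((((757) : ℤ) : R)) * mono 0 (-1)
    + ((((-303) : ℤ) : R)) * mono 0 0
    + ((((-450) : ℤ) : R)) * mono 0 1
    + ((((-48) : ℤ) : R)) * mono 0 2
    + ((((-60) : ℤ) : R)) * mono 0 3
    + ((((12) : ℤ) : R)) * mono 0 4
    + ((((36) : ℤ) : R)) * mono 0 5
    + ((((-204) + (-309) * (n:ℤ) : ℤ) : R)) * mono 1 (-4)
    + ((((42) : ℤ) : R)) * mono 1 (-3)
    + ((((78) : ℤ) : R)) * mono 1 (-2)
    + ((((189) : ℤ) : R)) * mono 1 (-1)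
    + ((((-33) : ℤ) : R)) * mono 1 0
    + ((((6) : ℤ) : R)) * mono 1 1
    + ((((-174) : ℤ) : R)) * mono 1 2
    + ((((-72) : ℤ) : R)) * mono 1 3
    + ((((12) : ℤ) : R)) * mono 1 4
    + ((((6) : ℤ) : R)) * mono 1 5
    + ((((33) : ℤ) : R)) * mono 2 (-4)
    + ((((105) : ℤ) : R)) * mono 2 (-3)
    + ((((249) : ℤ) : R)) * mono 2 (-2)
    + ((((51) : ℤ) : R)) * mono 2 (-1)
    + ((((120) : ℤ) : R)) * mono 2 0
    + ((((36) : ℤ) : R)) * mono 2 1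
    + ((((-30) : ℤ) : R)) * mono 2 2
    + ((((-24) : ℤ) : R)) * mono 2 3
    + ((((-108) : ℤ) : R)) * mono 3 (-4)
    + ((((-51) : ℤ) : R)) * mono 3 (-3)
    + ((((78) : ℤ) : R)) * mono 3 (-2)
    + ((((96) : ℤ) : R)) * mono 3 (-1)
    + ((((90) : ℤ) : R)) * mono 3 0
    + ((((18) : ℤ) : R)) * mono 3 1
    + ((((-18) : ℤ) : R)) * mono 3 2
    + ((((-6) : ℤ) : R)) * mono 3 3
    + ((((-36) : ℤ) : R)) * mono 4 (-4)
    + ((((-96) : ℤ) : R)) * mono 4 (-3)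
    + ((((-72) : ℤ) : R)) * mono 4 (-2)
    + ((((18) : ℤ) : R)) * mono 4 0
    + ((((6) : ℤ) : R)) * mono 4 1

lemma lemP1 : Wq * Kq 3 ^ 2 = WK2v := by
  rw [hWq, hKq]
  simp only [WK2v, wd0, wd1, wd2, wd3, wd4, wd5, wd6, wd7, wd8, wd9, wd10, wd11, wd12, wd13, wd14, wd15, wd16, wd17, wd18, wd19, wd20, wd21, wd22, wd23, wd24, wd25, wd26, wd27, wd28, wd29, wd30, wd31, wd32, wd33, wd34, wd35, wd36, wd37, wd38, wd39, wd40, wd41, wd42, wd43, wd44, wd45, wd46, wd47, wd48, wd49, wd50, wd51, wd52, wd53, wd54, wd55, wd56, wd57, wd58, wd59, wd60, wd61, wd62, wd63, wd64, wd65, wd66, wd67, wd68, wd69, wd70, wd71, wd72, wd73, wd74, wd75, wd76, wd77, wd78, wd79, wd80, mono_zero]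
  push_cast
  linear_combination ((2) + (1)*v' + (2)*v + (0)*v*v' + (-7)*v^2 + (-9)*v^2*v' + (-2)*v^2*v'^2 + (-2)*v^3 + (1)*v^4 + (2)*v^4*v' + (-2)*u'*v^2 + (-2)*u'*v^2*v' + (-2)*u'*v^3 + (-2)*u'*v^3*v' + (1)*u + (-6)*u*v' + (-2)*u*v'^2 + (2)*u*v + (-8)*u*v*v' + (-2)*u*v*v'^2 + (-6)*u*v^2 + (-6)*u*v^2*v' + (-1)*u*v^2*v'^2 + (-8)*u*v^3 + (-2)*u*v^3*v' + (-2)*u*v^4 + (-1)*u*u'*v' + (-2)*u*u'*v*v' + (-1)*u*u'*v^2 + (-1)*u*u'*v^2*v' + (-2)*u*u'*v^3 + (-1)*u*u'*v^4 + (6)*u^2 + (-2)*u^2*v'^2 + (8)*u^2*v + (-2)*u^2*v*v'^2 + (-2)*u^2*v^2*v' + (-2)*u^2*v^3 + (-2)*u^2*v^3*v' + (1)*u^2*u' + (2)*u^2*u'*v + (1)*u^2*u'*v^2 + (2)*u^3 + (2)*u^3*v' + (2)*u^3*v + (2)*u^3*v*v') * hu + ((0) + (-8)*v + (-2)*v*v'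 + (6)*v^2 + (1)*v^2*v' + (4)*v^3 + (1)*u' + (-8)*u'*v + (-1)*u'*v*v' + (-2)*u'*v^2 + (2)*u'*v^3 + (-2)*u'^2*v + (-2)*u'^2*v^2 + (-7)*u + (-2)*u*v' + (-4)*u*v + (-1)*u*v*v' + (6)*u*v^2 + (2)*u*v^2*v' + (2)*u*v^3 + (-7)*u^2 + (-4)*u^2*v' + (-8)*u^2*v + (-1)*u^2*v*v' + (-2)*u^2*v^2 + (1)*u^2*v^2*v' + (-2)*u^3*v' + (-8)*u^3*v + (-2)*u^3*v*v' + (-2)*u^3*v^2 + (1)*u^4 + (-2)*u^4*v + (-1)*u^4*v*v') * hv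

lemma lemP2 : Wq * Kq 3 = WK1v := by
  rw [hWq, hKq]
  simp only [WK1v, wd0, wd1, wd2, wd3, wd4, wd5, wd6, wd7, wd8, wd9, wd10, wd11, wd12, wd13, wd14, wd15, wd16, wd17, wd18, wd19, wd20, wd21, wd22, wd23, wd24, wd25, wd26, wd27, wd28, wd29, wd30, wd31, wd32, wd33, wd34, wd35, wd36, wd37, wd38, wd39, wd40, wd41, wd42, wd43, wd44, wd45, wd46, wd47, wd48, wd49, wd50, wd51, wd52, wd53, wd54, wd55, wd56, wd57, wd58, wd59, wd60, wd61, wd62, wd63, wd64, wd65, wd66, wd67, wd68, wd69, wd70, wd71, wd72, wd73, wd74, wd75, wd76, wd77, wd78, wd79, wd80, mono_zero]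
  push_cast
  linear_combination ((-1)*v^2 + (-1)*v^2*v' + (-1)*u*v' + (-1)*u*v*v' + (-1)*u*v^2 + (-1)*u*v^3 + (1)*u^2 + (1)*u^2*v) * hu + ((-1)*v + (1)*v^2 + (-1)*u'*v + (-1)*u + (1)*u*v^2 + (-1)*u^2 + (-1)*u^2*v + (-1)*u^3*v) * hv

lemma lemP3 (n : ℕ) : G1Xv n * Kq 3 = G1Kv n := by
  rw [hKq]
  simp only [G1Xv, G1Kv, wd0, wd1, wd2, wd3, wd4, wd5, wd6, wd7, wd8, wd9, wd10, wd11, wd12, wd13, wd14, wd15, wd16, wd17, wd18, wd19, wd20, wd21, wd22, wd23, wd24, wd25, wd26, wd27, wd28, wd29, wd30, wd31, wd32, wd33, wd34, wd35, wd36, wd37, wd38, wd39, wd40, wd41, wd42, wd43, wd44, wd45, wd46, wd47, wd48, wd49, wd50, wd51, wd52, wd53, wd54, wd55, wd56, wd57, wd58, wd59, wd60, wd61, wd62, wd63, wd64, wd65, wd66, wd67, wd68, wd69, wd70, wd71, wd72, wd73, wd74, wd75, wd76, wd77, wd78, wd79, wd80, mono_zero]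
  push_cast
  linear_combination ((150) + (48)*(n:R) + (997)*v' + (24)*v'*(n:R) + (-1159)*v'^2 + (303)*v'^2*(n:R) + (-2652)*v'^3 + (32)*v'^3*(n:R) + (-1108)*v'^4 + (-277)*v'^4*(n:R) + (-108)*v + (-24)*v*(n:R) + (-153)*v*v' + (12)*v*v'*(n:R) + (-270)*v*v'^2 + (-6)*v*v'^2*(n:R) + (171)*v*v'^3 + (-186)*v^2 + (6)*v^2*(n:R) + (-342)*v^2*v' + (24)*v^2*v'*(n:R) + (210)*v^3 + (54)*v^3*(n:R) + (138)*v^3*v' + (-6)*v^3*v'*(n:R) + (-18)*v^4 + (18)*v^4*(n:R) + (30)*v^4*v' + (6)*v^4*v'*(n:R) + (-30)*v^5 + (-6)*v^5*(n:R) + (-1406)*u' + (-1172)*u'*(n:R) + (-324)*u'*v' + (-64)*u'*v'*(n:R) + (1892)*u'*v'^2 + (1662)*u'*v'^2*(n:R) + (1066)*u'*v'^3 + (618)*u'*v'^3*(n:R) + (256)*u'*v'^4 + (64)*u'*v'^4*(n:R) + (-432)*u'*v + (-432)*u'*v*v' + (-260)*u'*v^2 + (-12)*u'*v^2*(n:R)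 + (-260)*u'*v^2*v' + (-12)*u'*v^2*v'*(n:R) + (72)*u'*v^3 + (-12)*u'*v^3*(n:R) + (72)*u'*v^3*v' + (-12)*u'*v^3*v'*(n:R) + (-831)*u'^2 + (-831)*u'^2*(n:R) + (-927)*u'^2*v'*(n:R) + (1023)*u'^2*v'^2 + (-96)*u'^2*v'^2*(n:R) + (192)*u'^2*v'^3 + (2058)*u'^2*v + (96)*u'^2*v*(n:R) + (2058)*u'^2*v*v' + (96)*u'^2*v*v'*(n:R) + (5730)*u'^2*v^2 + (1758)*u'^2*v^2*(n:R) + (5730)*u'^2*v^2*v' + (1758)*u'^2*v^2*v'*(n:R) + (210)*u'^2*v^3 + (210)*u'^2*v^3*v' + (-12)*u + (-48)*u*(n:R) + (-108)*u*v' + (60)*u*v'*(n:R) + (-144)*u*v'^2 + (-24)*u*v'^2*(n:R) + (90)*u*v'^3 + (-60)*u*v + (-96)*u*v*(n:R) + (-108)*u*v*v' + (60)*u*v*v'*(n:R) + (-144)*u*v*v'^2 + (-24)*u*v*v'^2*(n:R) + (90)*u*v*v'^3 + (36)*u*v^2 + (12)*u*v^2*(n:R) + (-60)*u*v^3 + (36)*u*v^3*(n:R)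 + (-144)*u*v^4 + (-24)*u*v^4*(n:R) + (-72)*u^2 + (-72)*u^2*(n:R) + (90)*u^2*v' + (18)*u^2*v'*(n:R) + (54)*u^2*v'^2 + (-18)*u^2*v'^2*(n:R) + (108)*u^2*v'^3 + (-36)*u^2*v + (-54)*u^2*v*(n:R) + (90)*u^2*v*v' + (18)*u^2*v*v'*(n:R) + (54)*u^2*v*v'^2 + (-18)*u^2*v*v'^2*(n:R) + (108)*u^2*v*v'^3 + (-90)*u^2*v^2 + (-126)*u^2*v^3 + (-18)*u^2*v^3*(n:R) + (144)*u^3 + (24)*u^3*(n:R) + (144)*u^3*v' + (24)*u^3*v'*(n:R) + (144)*u^3*v + (24)*u^3*v*(n:R) + (144)*u^3*v*v' + (24)*u^3*v*v'*(n:R)) * hu + ((-153) + (12)*(n:R) + (-270)*v' + (-6)*v'*(n:R) + (171)*v'^2 + (-342)*v + (24)*v*(n:R) + (138)*v^2 + (-6)*v^2*(n:R) + (30)*v^3 + (6)*v^3*(n:R) + (196)*u' + (-6)*u'*(n:R) + (-1715)*u'*v' + (309)*u'*v'*(n:R) + (-1108)*u'*v'^2 + (-277)*u'*v'^2*(n:R)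 + (-602)*u'*v + (12)*u'*v*(n:R) + (210)*u'*v^2 + (-18)*u'*v^2*(n:R) + (30)*u'*v^3 + (6)*u'*v^3*(n:R) + (3534)*u'^2 + (1204)*u'^2*(n:R) + (-905)*u'^2*v' + (863)*u'^2*v'*(n:R) + (-852)*u'^2*v'^2 + (-213)*u'^2*v'^2*(n:R) + (5470)*u'^2*v + (1746)*u'^2*v*(n:R) + (282)*u'^2*v^2 + (-12)*u'^2*v^2*(n:R) + (3971)*u'^3 + (1108)*u'^3*(n:R) + (1002)*u'^3*v' + (554)*u'^3*v'*(n:R) + (256)*u'^3*v'^2 + (64)*u'^3*v'^2*(n:R) + (5730)*u'^3*v + (1758)*u'^3*v*(n:R) + (210)*u'^3*v^2 + (831)*u'^4 + (-96)*u'^4*(n:R) + (192)*u'^4*v' + (3)*u + (18)*u*(n:R) + (-414)*u*v' + (-30)*u*v'*(n:R) + (261)*u*v'^2 + (90)*u*v + (42)*u*v*(n:R) + (-18)*u*v^2 + (18)*u*v^2*(n:R) + (-30)*u*v^3 + (-6)*u*v^3*(n:R) + (-30)*u^2*(n:R) + (-90)*u^2*v' + (-42)*u^2*v'*(n:R) +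 (198)*u^2*v'^2 + (174)*u^2*v + (102)*u^2*v*(n:R) + (-162)*u^2*v^2 + (-6)*u^2*v^2*(n:R) + (-30)*u^2*v^3 + (-6)*u^2*v^3*(n:R) + (222)*u^3 + (12)*u^3*(n:R) + (54)*u^3*v' + (-18)*u^3*v'*(n:R) + (108)*u^3*v'^2 + (-42)*u^3*v + (42)*u^3*v*(n:R) + (-144)*u^3*v^2 + (-24)*u^3*v^2*(n:R) + (180)*u^4 + (42)*u^4*(n:R) + (-126)*u^4*v + (-18)*u^4*v*(n:R)) * hv

lemma lemP4 (n : ℕ) : G1v n * KXv = G1XPv n := by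
  simp only [G1v, KXv, G1XPv, wd0, wd1, wd2, wd3, wd4, wd5, wd6, wd7, wd8, wd9, wd10, wd11, wd12, wd13, wd14, wd15, wd16, wd17, wd18, wd19, wd20, wd21, wd22, wd23, wd24, wd25, wd26, wd27, wd28, wd29, wd30, wd31, wd32, wd33, wd34, wd35, wd36, wd37, wd38, wd39, wd40, wd41, wd42, wd43, wd44, wd45, wd46, wd47, wd48, wd49, wd50, wd51, wd52, wd53, wd54, wd55, wd56, wd57, wd58, wd59, wd60, wd61, wd62, wd63, wd64, wd65, wd66, wd67, wd68, wd69, wd70, wd71, wd72, wd73, wd74, wd75, wd76, wd77, wd78, wd79, wd80, mono_zero]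
  push_cast
  linear_combination ((-150) + (-48)*(n:R) + (-997)*v' + (-24)*v'*(n:R) + (1159)*v'^2 + (-303)*v'^2*(n:R) + (2652)*v'^3 + (-32)*v'^3*(n:R) + (1108)*v'^4 + (277)*v'^4*(n:R) + (108)*v + (24)*v*(n:R) + (153)*v*v' + (-12)*v*v'*(n:R) + (270)*v*v'^2 + (6)*v*v'^2*(n:R) + (-171)*v*v'^3 + (186)*v^2 + (-6)*v^2*(n:R) + (342)*v^2*v' + (-24)*v^2*v'*(n:R) + (-210)*v^3 + (-54)*v^3*(n:R) + (-138)*v^3*v' + (6)*v^3*v'*(n:R) + (18)*v^4 + (-18)*v^4*(n:R) + (-30)*v^4*v' + (-6)*v^4*v'*(n:R) + (30)*v^5 + (6)*v^5*(n:R) + (703)*u' + (586)*u'*(n:R) + (162)*u'*v' + (32)*u'*v'*(n:R) + (-946)*u'*v'^2 + (-831)*u'*v'^2*(n:R) + (-533)*u'*v'^3 + (-309)*u'*v'^3*(n:R) + (-128)*u'*v'^4 + (-32)*u'*v'^4*(n:R) + (216)*u'*v + (216)*u'*v*v' + (130)*u'*v^2 + (6)*u'*v^2*(n:R) + (130)*u'*v^2*v'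 + (6)*u'*v^2*v'*(n:R) + (-36)*u'*v^3 + (6)*u'*v^3*(n:R) + (-36)*u'*v^3*v' + (6)*u'*v^3*v'*(n:R) + (277)*u'^2 + (277)*u'^2*(n:R) + (309)*u'^2*v'*(n:R) + (-341)*u'^2*v'^2 + (32)*u'^2*v'^2*(n:R) + (-64)*u'^2*v'^3 + (-686)*u'^2*v + (-32)*u'^2*v*(n:R) + (-686)*u'^2*v*v' + (-32)*u'^2*v*v'*(n:R) + (-1910)*u'^2*v^2 + (-586)*u'^2*v^2*(n:R) + (-1910)*u'^2*v^2*v' + (-586)*u'^2*v^2*v'*(n:R) + (-70)*u'^2*v^3 + (-70)*u'^2*v^3*v' + (6)*u + (24)*u*(n:R) + (54)*u*v' + (-30)*u*v'*(n:R) + (72)*u*v'^2 + (12)*u*v'^2*(n:R) + (-45)*u*v'^3 + (30)*u*v + (48)*u*v*(n:R) + (54)*u*v*v' + (-30)*u*v*v'*(n:R) + (72)*u*v*v'^2 + (12)*u*v*v'^2*(n:R) + (-45)*u*v*v'^3 + (-18)*u*v^2 + (-6)*u*v^2*(n:R) + (30)*u*v^3 + (-18)*u*v^3*(n:R) + (72)*u*v^4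 + (12)*u*v^4*(n:R) + (24)*u^2 + (24)*u^2*(n:R) + (-30)*u^2*v' + (-6)*u^2*v'*(n:R) + (-18)*u^2*v'^2 + (6)*u^2*v'^2*(n:R) + (-36)*u^2*v'^3 + (12)*u^2*v + (18)*u^2*v*(n:R) + (-30)*u^2*v*v' + (-6)*u^2*v*v'*(n:R) + (-18)*u^2*v*v'^2 + (6)*u^2*v*v'^2*(n:R) + (-36)*u^2*v*v'^3 + (30)*u^2*v^2 + (42)*u^2*v^3 + (6)*u^2*v^3*(n:R) + (-36)*u^3 + (-6)*u^3*(n:R) + (-36)*u^3*v' + (-6)*u^3*v'*(n:R) + (-36)*u^3*v + (-6)*u^3*v*(n:R) + (-36)*u^3*v*v' + (-6)*u^3*v*v'*(n:R)) * hu + ((153) + (-12)*(n:R) + (270)*v' + (6)*v'*(n:R) + (-171)*v'^2 + (342)*v + (-24)*v*(n:R) + (-138)*v^2 + (6)*v^2*(n:R) + (-30)*v^3 + (-6)*v^3*(n:R) + (498)*u' + (12)*u'*(n:R) + (-201)*u'*v' + (-735)*u'*v'^2 + (130)*u'*v + (6)*u'*v*(n:R) + (-36)*u'*v^2 + (6)*u'*v^2*(n:R)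 + (140)*u'^2 + (-32)*u'^2*(n:R) + (-1715)*u'^2*v' + (309)*u'^2*v'*(n:R) + (-1108)*u'^2*v'^2 + (-277)*u'^2*v'^2*(n:R) + (-1910)*u'^2*v + (-586)*u'^2*v*(n:R) + (-70)*u'^2*v^2 + (541)*u'^3 + (554)*u'^3*(n:R) + (405)*u'^3*v' + (277)*u'^3*v'*(n:R) + (128)*u'^3*v'^2 + (32)*u'^3*v'^2*(n:R) + (277)*u'^4 + (-32)*u'^4*(n:R) + (64)*u'^4*v' + (90)*u + (-54)*u*(n:R) + (72)*u*v' + (12)*u*v'*(n:R) + (-45)*u*v'^2 + (120)*u*v + (-24)*u*v*(n:R) + (-24)*u*v^2 + (30)*u*v^2*(n:R) + (-60)*u*v^3 + (-12)*u*v^3*(n:R) + (36)*u^2 + (-66)*u^2*(n:R) + (-18)*u^2*v' + (6)*u^2*v'*(n:R) + (-36)*u^2*v'^2 + (90)*u^2*v + (42)*u^2*v*(n:R) + (-18)*u^2*v^2 + (18)*u^2*v^2*(n:R) + (-30)*u^2*v^3 + (-6)*u^2*v^3*(n:R) + (-60)*u^3 + (-30)*u^3*(n:R) + (42)*u^3*v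 + (30)*u^3*v*(n:R) + (-72)*u^3*v^2 + (-12)*u^3*v^2*(n:R) + (12)*u^4 + (6)*u^4*(n:R) + (-42)*u^4*v + (-6)*u^4*v*(n:R)) * hv

lemma lemP5 (n : ℕ) : G2Yv n * Kq 3 = G2Kv n := by
  rw [hKq]
  simp only [G2Yv, G2Kv, wd0, wd1, wd2, wd3, wd4, wd5, wd6, wd7, wd8, wd9, wd10, wd11, wd12, wd13, wd14, wd15, wd16, wd17, wd18, wd19, wd20, wd21, wd22, wd23, wd24, wd25, wd26, wd27, wd28, wd29, wd30, wd31, wd32, wd33, wd34, wd35, wd36, wd37, wd38, wd39, wd40, wd41, wd42, wd43, wd44, wd45, wd46, wd47, wd48, wd49, wd50, wd51, wd52, wd53, wd54, wd55, wd56, wd57, wd58, wd59, wd60, wd61, wd62, wd63, wd64, wd65, wd66, wd67, wd68, wd69, wd70, wd71, wd72, wd73, wd74, wd75, wd76, wd77, wd78, wd79, wd80, mono_zero]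
  push_cast
  linear_combination ((-565)*v' + (1678)*v'^2 + (3392)*v'^3 + (96)*v'^3*(n:R) + (927)*v'^4 + (96)*v'^4*(n:R) + (-24)*v + (165)*v*v' + (120)*v*v'^2 + (315)*v*v'^3 + (66)*v^2 + (276)*v^2*v' + (-192)*v^3 + (-180)*v^3*v' + (156)*v^4 + (96)*v^4*v' + (24)*v^5 + (-183)*u'*v' + (277)*u'*v'*(n:R) + (179)*u'*v'^2 + (895)*u'*v'^2*(n:R) + (170)*u'*v'^3 + (618)*u'*v'^3*(n:R) + (-192)*u'*v'^4 + (1108)*u'*v + (586)*u'*v*(n:R) + (1108)*u'*v*v' + (586)*u'*v*v'*(n:R) + (236)*u'*v^2 + (236)*u'*v^2*v' + (-42)*u'*v^3 + (-42)*u'*v^3*v' + (-1236)*u'^2*v' + (-309)*u'^2*v'*(n:R) + (-1492)*u'^2*v'^2 + (-373)*u'^2*v'^2*(n:R) + (-256)*u'^2*v'^3 + (-64)*u'^2*v'^3*(n:R) + (-2742)*u'^2*v + (-618)*u'^2*v*(n:R) + (-2742)*u'^2*v*v' + (-618)*u'^2*v*v'*(n:R) + (-5108)*u'^2*v^2 +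 (-1172)*u'^2*v^2*(n:R) + (-5108)*u'^2*v^2*v' + (-1172)*u'^2*v^2*v'*(n:R) + (-210)*u'^2*v^3 + (-210)*u'^2*v^3*v' + (114)*u*v' + (90)*u*v'^2 + (-216)*u*v'^3 + (114)*u*v*v' + (90)*u*v*v'^2 + (-216)*u*v*v'^3 + (-24)*u*v^2 + (-24)*u*v^3 + (-72)*u^2*v' + (-192)*u^2*v'^2 + (-108)*u^2*v'^3 + (-18)*u^2*v + (-72)*u^2*v*v' + (-192)*u^2*v*v'^2 + (-108)*u^2*v*v'^3 + (-30)*u^2*v^2 + (-12)*u^2*v^3) * hu + ((303) + (84)*v' + (-612)*v'^2 + (-927)*v'^2*(n:R) + (312)*v + (-180)*v^2 + (216)*v^3 + (738)*u' + (586)*u'*(n:R) + (2114)*u'*v' + (-831)*u'*v'^2*(n:R) + (512)*u'*v + (-222)*u'*v^2 + (96)*u'*v^3 + (-2409)*u'^2 + (245)*u'^2*(n:R) + (2512)*u'^2*v' + (618)*u'^2*v'*(n:R) + (735)*u'^2*v'^2 + (96)*u'^2*v'^2*(n:R) + (-4872)*u'^2*v + (-1172)*u'^2*v*(n:R) + (-252)*u'^2*v^2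 + (-4161)*u'^3 + (-650)*u'^3*(n:R) + (106)*u'^3*v' + (554)*u'^3*v'*(n:R) + (-192)*u'^3*v'^2 + (-5108)*u'^3*v + (-1172)*u'^3*v*(n:R) + (-210)*u'^3*v^2 + (-1236)*u'^4 + (-309)*u'^4*(n:R) + (-256)*u'^4*v' + (-64)*u'^4*v'*(n:R) + (33)*u + (210)*u*v' + (99)*u*v'^2 + (-12)*u*v + (36)*u*v^2 + (144)*u*v^3 + (-120)*u^2 + (-102)*u^2*v' + (-324)*u^2*v'^2 + (-72)*u^2*v + (36)*u^2*v^2 + (24)*u^2*v^3 + (-90)*u^3 + (-192)*u^3*v' + (-108)*u^3*v'^2 + (-36)*u^3*v + (-18)*u^4 + (-12)*u^4*v) * hv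

lemma lemP6 (n : ℕ) : G2v n * KYv = G2YPv n := by
  simp only [G2v, KYv, G2YPv, wd0, wd1, wd2, wd3, wd4, wd5, wd6, wd7, wd8, wd9, wd10, wd11, wd12, wd13, wd14, wd15, wd16, wd17, wd18, wd19, wd20, wd21, wd22, wd23, wd24, wd25, wd26, wd27, wd28, wd29, wd30, wd31, wd32, wd33, wd34, wd35, wd36, wd37, wd38, wd39, wd40, wd41, wd42, wd43, wd44, wd45, wd46, wd47, wd48, wd49, wd50, wd51, wd52, wd53, wd54, wd55, wd56, wd57, wd58, wd59, wd60, wd61, wd62, wd63, wd64, wd65, wd66, wd67, wd68, wd69, wd70, wd71, wd72, wd73, wd74, wd75, wd76, wd77, wd78, wd79, wd80, mono_zero]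
  push_cast
  linear_combination ((505)*v' + (-592)*v'^2 + (1075)*v'^3 + (309)*v'^4 + (32)*v'^4*(n:R) + (-165)*v*v' + (-60)*v*v'^2 + (-105)*v*v'^3 + (-162)*v^2 + (-138)*v^2*v' + (-24)*v^3 + (60)*v^3*v' + (12)*v^4 + (-24)*v^4*v' + (6)*v^5 + (-99)*u'*v' + (-32)*u'*v'*(n:R) + (-183)*u'*v'^2 + (277)*u'*v'^2*(n:R) + (181)*u'*v'^3 + (309)*u'*v'^3*(n:R) + (-64)*u'*v'^4 + (-1108)*u'*v*v' + (-586)*u'*v*v'*(n:R) + (-118)*u'*v^2*v' + (14)*u'*v^3*v' + (-944)*u'^2*v' + (-245)*u'^2*v'*(n:R) + (-1236)*u'^2*v'^2 + (-309)*u'^2*v'^2*(n:R) + (-128)*u'^2*v'^3 + (-32)*u'^2*v'^3*(n:R) + (2742)*u'^2*v*v' + (618)*u'^2*v*v'*(n:R) + (2554)*u'^2*v^2*v' + (586)*u'^2*v^2*v'*(n:R) + (70)*u'^2*v^3*v' + (-114)*u*v*v' + (-45)*u*v*v'^2 + (72)*u*v*v'^3 + (-12)*u*v^3 + (72)*u^2*v*v'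 + (96)*u^2*v*v'^2 + (36)*u^2*v*v'^3 + (-18)*u^2*v^2 + (-6)*u^2*v^3) * hu + ((-303) + (-42)*v' + (204)*v'^2 + (309)*v'^2*(n:R) + (-156)*v + (60)*v^2 + (-54)*v^3 + (-738)*u' + (-586)*u'*(n:R) + (-1057)*u'*v' + (277)*u'*v'^2*(n:R) + (-256)*u'*v + (74)*u'*v^2 + (-24)*u'*v^3 + (2409)*u'^2 + (-245)*u'^2*(n:R) + (-1256)*u'^2*v' + (-309)*u'^2*v'*(n:R) + (-245)*u'^2*v'^2 + (-32)*u'^2*v'^2*(n:R) + (2436)*u'^2*v + (586)*u'^2*v*(n:R) + (84)*u'^2*v^2 + (4161)*u'^3 + (650)*u'^3*(n:R) + (-53)*u'^3*v' + (-277)*u'^3*v'*(n:R) + (64)*u'^3*v'^2 + (2554)*u'^3*v + (586)*u'^3*v*(n:R) + (70)*u'^3*v^2 + (1236)*u'^4 + (309)*u'^4*(n:R) + (128)*u'^4*v' + (32)*u'^4*v'*(n:R) + (-33)*u + (-105)*u*v' + (-33)*u*v'^2 + (6)*u*v + (-12)*u*v^2 + (-36)*u*v^3 + (120)*u^2 +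 (51)*u^2*v' + (108)*u^2*v'^2 + (36)*u^2*v + (-12)*u^2*v^2 + (-6)*u^2*v^3 + (90)*u^3 + (96)*u^3*v' + (36)*u^3*v'^2 + (18)*u^3*v + (18)*u^4 + (6)*u^4*v) * hv


lemma hdxG1 (n : ℕ) : DX (G1v n) = G1Xv n := by
  simp only [G1v, G1Xv, dxadd, dx_term]
  push_cast
  ring

lemma hdyG2 (n : ℕ) : DY (G2v n) = G2Yv n := by
  simp only [G2v, G2Yv, dyadd, dy_term]
  push_cast
  ring

lemma hKX : DX (Kq 3) = KXv := by
  simp only [Kq, KXv, dxadd, dx_single00, dx_mono]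
  push_cast
  ring

lemma hKY : DY (Kq 3) = KYv := by
  simp only [Kq, KYv, dyadd, dy_single00, dy_mono]
  push_cast
  ring

lemma hrtK : RT (Kq 3) = Kq 3 := by
  simp only [Kq, map_add, rt_single00, rt_mono]
  norm_num
  ring

lemma hrtUR (n : ℕ) : RT (URv n) = URRv n := by
  simp only [URv, URRv, map_add, map_mul, map_intCast, rt_mono]
  norm_num
  ring

lemma base0 : Sq 3 0 = 1 := by
  show (Wq * Kq 3 ^ 0).coeff ((0,0) : ℤ×ℤ) = 1
  rw [pow_zero, mul_one, Wq]
  simp only [eval_sub, eval_add, eval_mono, mono]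
  norm_num [Prod.ext_iff]

lemma base1 : Sq 3 1 = 3 := by
  show (Wq * Kq 3 ^ 1).coeff ((0,0) : ℤ×ℤ) = 3
  rw [pow_one, lemP2]
  simp only [WK1v, eval_add, eval_cast_mul, eval_mono]
  norm_num [Prod.ext_iff]

lemma star (n : ℕ) :
    (((6*((n:ℤ)+5)*((n:ℤ)+6) : ℤ) : R)) * WK2v + ((((-12)*(5*(n:ℤ)*(n:ℤ)+36*(n:ℤ)+61) : ℤ) : R)) * WK1v + (((54*((n:ℤ)+1)*((n:ℤ)+4) : ℤ) : R)) * Wq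
    = G1Kv n + ((n:R)+1) * G1XPv n + G2Kv n + ((n:R)+1) * G2YPv n + (URv n - URRv n) := by
  simp only [WK2v, WK1v, G1Kv, G1XPv, G2Kv, G2YPv, URv, URRv]
  rw [Wq]
  push_cast
  ring

lemma e1 (n : ℕ) : DX (G1v n * Kq 3 ^ (n+1))
    = G1Xv n * Kq 3 ^ (n+1) + ((n:R)+1) * (G1v n * (Kq 3 ^ n * KXv)) := by
  rw [dxmul, dxpow, hdxG1, hKX]
  ring

lemma e2 (n : ℕ) : DY (G2v n * Kq 3 ^ (n+1))
    = G2Yv n * Kq 3 ^ (n+1) + ((n:R)+1) * (G2v n * (Kq 3 ^ n * KYv)) := by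
  rw [dymul, dypow, hdyG2, hKY]
  ring

lemma e3 (n : ℕ) : RT (URv n * Kq 3 ^ n) = URRv n * Kq 3 ^ n := by
  rw [map_mul, map_pow, hrtK, hrtUR]

lemma key (n : ℕ) :
    (((6*((n:ℤ)+5)*((n:ℤ)+6) : ℤ) : R)) * (Wq * Kq 3 ^ (n+2)) + ((((-12)*(5*(n:ℤ)*(n:ℤ)+36*(n:ℤ)+61) : ℤ) : R)) * (Wq * Kq 3 ^ (n+1))
      + (((54*((n:ℤ)+1)*((n:ℤ)+4) : ℤ) : R)) * (Wq * Kq 3 ^ n)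
    = DX (G1v n * Kq 3 ^ (n+1)) + DY (G2v n * Kq 3 ^ (n+1))
      + (URv n * Kq 3 ^ n - RT (URv n * Kq 3 ^ n)) := by
  rw [e1 n, e2 n, e3 n]
  linear_combination (Kq 3 ^ n) * star n
    + ((((6*((n:ℤ)+5)*((n:ℤ)+6) : ℤ) : R)) * Kq 3 ^ n) * lemP1 + (((((-12)*(5*(n:ℤ)*(n:ℤ)+36*(n:ℤ)+61) : ℤ) : R)) * Kq 3 ^ n) * lemP2
    - (Kq 3 ^ n) * lemP3 n - (((n:R)+1) * Kq 3 ^ n) * lemP4 n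
    - (Kq 3 ^ n) * lemP5 n - (((n:R)+1) * Kq 3 ^ n) * lemP6 n

lemma recur (n : ℕ) :
    ((n : ℤ) + 5) * ((n : ℤ) + 6) * Sq 3 (n + 2)
      - 2 * (5 * (n : ℤ) ^ 2 + 36 * (n : ℤ) + 61) * Sq 3 (n + 1)
      + 9 * ((n : ℤ) + 1) * ((n : ℤ) + 4) * Sq 3 n = 0 := by
  have h00 := congrArg (fun f : R => f.coeff ((0,0) : ℤ×ℤ)) (key n)
  simp only [eval_add, eval_sub, eval_cast_mul, dx0, dy0, rt_apply0, sub_self, add_zero, zero_add] at h00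
  have hs2 : Sq 3 (n+2) = (Wq * Kq 3 ^ (n+2)).coeff ((0,0) : ℤ×ℤ) := rfl
  have hs1 : Sq 3 (n+1) = (Wq * Kq 3 ^ (n+1)).coeff ((0,0) : ℤ×ℤ) := rfl
  have hs0 : Sq 3 n = (Wq * Kq 3 ^ n).coeff ((0,0) : ℤ×ℤ) := rfl
  have h2 : (6:ℤ) * (((n : ℤ) + 5) * ((n : ℤ) + 6) * Sq 3 (n + 2)
      - 2 * (5 * (n : ℤ) ^ 2 + 36 * (n : ℤ) + 61) * Sq 3 (n + 1)
      + 9 * ((n : ℤ) + 1) * ((n : ℤ) + 4) * Sq 3 n) = 0 := by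
    rw [hs2, hs1, hs0]
    linear_combination h00
  rcases mul_eq_zero.mp h2 with h | h
  · norm_num at h
  · exact h

end S3X

/-- `C₂(n) = S₃(n)` satisfies `C₂(0) = 1`, `C₂(1) = 3`, and for all `n ≥ 0`:
`(n+5)(n+6)·C₂(n+2) − 2(5n² + 36n + 61)·C₂(n+1) + 9(n+1)(n+4)·C₂(n) = 0`. -/
theorem S3_recurrence :
    Sq 3 0 = 1 ∧ Sq 3 1 = 3 ∧
    ∀ n : ℕ,
      ((n : ℤ) + 5) * ((n : ℤ) + 6) * Sq 3 (n + 2)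
      - 2 * (5 * (n : ℤ) ^ 2 + 36 * (n : ℤ) + 61) * Sq 3 (n + 1)
      + 9 * ((n : ℤ) + 1) * ((n : ℤ) + 4) * Sq 3 n = 0 := by
  refine ⟨S3X.base0, S3X.base1, fun n => S3X.recur n⟩
end
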